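/- arXiv:2310.09390 — 4 statements merged into one kernel-verified Lean document; each statement's English description precedes it below -/
import Mathlib

section
/- Let d be an odd positive integer and let c be a positive integer with gcd(d,c)=1 and d-2c ≥ 1. Then every transitive permutation group G of degree d that contains a permutation whose cycle type is [d-2c, c, c] is primitive. -/
/-- The cycle type of a permutation, including fixed points as parts equal to `1`. -/
def fullCycleType {Ω : Type*} [Fintype Ω] [DecidableEq Ω] (σ : Equiv.Perm Ω) : Multiset ℕ :=
  σ.cycleType + Multiset.replicate (Fintype.card Ω - σ.support.card) 1

/-- A multiset of positive integers summing to `d`, i.e. a partition of `d`. -/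
def IsPartitionOf (d : ℕ) (D : Multiset ℕ) : Prop :=
  (∀ x ∈ D, 0 < x) ∧ D.sum = d

/-- The defect `ν(D) = Σⱼ (dⱼ − 1)` of a partition. -/
def nu (D : Multiset ℕ) : ℕ := (D.map (· - 1)).sum

/-- The partition `[2,…,2,1]` of an odd number `d`, with `(d−1)/2` parts equal to `2`. -/
def twosAndOne (d : ℕ) : Multiset ℕ := Multiset.replicate ((d - 1) / 2) 2 + {1}

/-- A subgroup of the symmetric group on `Ω` is transitive. -/
def SubgroupTransitive {Ω : Type*} (G : Subgroup (Equiv.Perm Ω)) : Prop :=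
  ∀ x y : Ω, ∃ g ∈ G, g x = y

/-- `Λ` is a block for the subgroup `G` of the symmetric group on `Ω`. -/
def IsBlockOf {Ω : Type*} (G : Subgroup (Equiv.Perm Ω)) (Λ : Set Ω) : Prop :=
  Λ.Nonempty ∧ ∀ g ∈ G, (⇑g '' Λ = Λ ∨ Disjoint (⇑g '' Λ) Λ)

/-- A block is trivial if it is a singleton or the whole set. -/
def TrivialBlock {Ω : Type*} (Λ : Set Ω) : Prop :=
  (∃ x, Λ = {x}) ∨ Λ = Set.univ

/-- A subgroup of the symmetric group is primitive: transitive with only trivial blocks. -/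
def SubgroupPrimitive {Ω : Type*} (G : Subgroup (Equiv.Perm Ω)) : Prop :=
  SubgroupTransitive G ∧ ∀ Λ : Set Ω, IsBlockOf G Λ → TrivialBlock Λ

/-- A subgroup of the symmetric group is imprimitive: transitive but not primitive. -/
def SubgroupImprimitive {Ω : Type*} (G : Subgroup (Equiv.Perm Ω)) : Prop :=
  SubgroupTransitive G ∧ ¬ SubgroupPrimitive G

/-- The orbit of `x` under a subgroup `G` of the symmetric group on `Ω`. -/
def orbSet {Ω : Type*} (G : Subgroup (Equiv.Perm Ω)) (x : Ω) : Set Ω :=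
  {y | ∃ g ∈ G, g x = y}

/-- The number of orbits of a subgroup `G` of the symmetric group on `Ω`. -/
noncomputable def numOrbits {Ω : Type*} (G : Subgroup (Equiv.Perm Ω)) : ℕ :=
  Nat.card (Set.range (orbSet G))


section Helpers

private lemma nt_core (d c a t b i j : ℕ) (hd : Odd d) (hc : 0 < c) (hgcd : Nat.gcd d c = 1)
    (ha : a + 2 * c = d) (hb2 : 2 ≤ b) (hbd : b < d) (hbdvd : b ∣ d) (ht : 1 ≤ t)
    (hi : i ≤ 1) (hj : j ≤ 2) (hsum : t * b = i * a + j * c)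
    (hta : 1 ≤ i → t ∣ a) (htc : 1 ≤ j → t ∣ c) : False := by
  have hbodd : Odd b := by
    obtain ⟨k, hk⟩ := hbdvd
    rw [hk] at hd
    exact Nat.Odd.of_mul_left hd
  have hbc : ¬ b ∣ c := fun h => by
    have : b ∣ Nat.gcd d c := Nat.dvd_gcd hbdvd h
    rw [hgcd] at this
    have := Nat.le_of_dvd one_pos this
    omega
  have hcop2 : Nat.Coprime b 2 := by
    rw [Nat.coprime_comm]
    exact (Nat.Prime.coprime_iff_not_dvd Nat.prime_two).mpr
      (by rw [Nat.two_dvd_ne_zero, Nat.odd_iff.mp hbodd])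
  have hb2c : ¬ b ∣ 2 * c := fun h => hbc (hcop2.dvd_of_dvd_mul_right (by rwa [mul_comm] at h))
  interval_cases i <;> interval_cases j <;>
      simp only [zero_mul, one_mul, zero_add, add_zero] at hsum
  · -- t*b = 0
    have := Nat.mul_pos (show 0 < t by omega) (show 0 < b by omega)
    omega
  · exact hbc ⟨t, by rw [← hsum]; ring⟩
  · exact hb2c ⟨t, by rw [← hsum]; ring⟩
  · -- t*b = a
    have hba : b ∣ a := ⟨t, by rw [← hsum]; ring⟩
    have : b ∣ 2 * c := by
      have := Nat.dvd_sub hbdvd hba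
      rwa [show d - a = 2 * c by omega] at this
    exact hb2c this
  · -- t*b = a + c
    have h1 : b ∣ a + c := ⟨t, by rw [← hsum]; ring⟩
    have := Nat.dvd_sub hbdvd h1
    rw [show d - (a + c) = c by omega] at this
    exact hbc this
  · -- t*b = a + 2c = d
    obtain ⟨u, hu⟩ := hta (by omega)
    obtain ⟨v, hv⟩ := htc (by omega)
    have htd : t ∣ d := ⟨u + 2 * v, by rw [← ha, hu, hv]; ring⟩
    have : t ∣ Nat.gcd d c := Nat.dvd_gcd htd (htc (by omega))
    rw [hgcd] at this
    have ht1 := Nat.le_of_dvd one_pos this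
    have hb : b = d := by
      have : t = 1 := by omega
      rw [this, one_mul] at hsum
      omega
    omega

open Finset Equiv Equiv.Perm Pointwise in
private lemma ncard_dvd_of_block {Ω : Type*} [Fintype Ω] [DecidableEq Ω]
    (G : Subgroup (Equiv.Perm Ω))
    (htrans : ∀ x y : Ω, ∃ g ∈ G, g x = y)
    (Λ : Set Ω) (hne : Λ.Nonempty)
    (hbl : ∀ g ∈ G, (⇑g '' Λ = Λ ∨ Disjoint (⇑g '' Λ) Λ)) :
    Λ.ncard ∣ Fintype.card Ω := by
  have : MulAction.IsPretransitive G Ω := by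
    constructor
    intro x y
    obtain ⟨g, hgG, hgxy⟩ := htrans x y
    exact ⟨⟨g, hgG⟩, hgxy⟩
  have hsmul : ∀ (g : G) (S : Set Ω), g • S = ⇑(g : Equiv.Perm Ω) '' S := fun _ _ => rfl
  have hB : MulAction.IsBlock G Λ := by
    rw [MulAction.isBlock_iff_smul_eq_smul_or_disjoint]
    intro g₁ g₂
    have key := hbl ((g₂ : Equiv.Perm Ω)⁻¹ * g₁) (mul_mem (inv_mem g₂.2) g₁.2)
    have himg : ⇑((g₂ : Equiv.Perm Ω)⁻¹ * (g₁ : Equiv.Perm Ω)) '' Λ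
        = ⇑(g₂ : Equiv.Perm Ω)⁻¹ '' (⇑(g₁ : Equiv.Perm Ω) '' Λ) := by
      rw [← Set.image_comp]; rfl
    rw [himg] at key
    have hback : ∀ S : Set Ω, ⇑(g₂ : Equiv.Perm Ω) '' (⇑(g₂ : Equiv.Perm Ω)⁻¹ '' S) = S := by
      intro S; rw [← Set.image_comp]; simp
    rcases key with h | h
    · left
      rw [hsmul, hsmul, ← hback (⇑(g₁ : Equiv.Perm Ω) '' Λ), h]
    · right
      rw [hsmul, hsmul, ← hback (⇑(g₁ : Equiv.Perm Ω) '' Λ)]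
      exact Set.disjoint_image_of_injective (Equiv.injective _) h
  have := hB.ncard_dvd_card hne
  rwa [Nat.card_eq_fintype_card] at this

open Finset Equiv Equiv.Perm Pointwise in

private lemma block_analysis {Ω : Type*} [Fintype Ω] [DecidableEq Ω] (g : Equiv.Perm Ω) (L : Finset Ω)
    (hmeet : ∀ k : ℕ, ((Finset.image ⇑(g^k) L) ∩ L).Nonempty → Finset.image ⇑(g^k) L = L) :
    ∃ (t : ℕ) (S : Multiset ℕ), 0 < t ∧ S ≤ fullCycleType g ∧ S.sum = t * L.card ∧
      ∀ ℓ ∈ S, t ∣ ℓ := by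
  classical
  set P : ℕ → Finset Ω := fun i => Finset.image ⇑(g^i) L with hP
  have hP0 : P 0 = L := by simp [hP]
  have hPcard : ∀ i, (P i).card = L.card := fun i =>
    Finset.card_image_of_injective _ (Equiv.injective _)
  have himg : ∀ m n, Finset.image ⇑(g^m) (P n) = P (m + n) := by
    intro m n
    simp only [hP, Finset.image_image]
    rw [pow_add]
    rfl
  have hcancel : ∀ (m : ℕ) (A B : Finset Ω),
      Finset.image ⇑(g^m) A = Finset.image ⇑(g^m) B → A = B := fun m A B h =>
    Finset.image_injective (Equiv.injective _) h
  have hex : ∃ k, 0 < k ∧ P k = L := by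
    refine ⟨orderOf g, orderOf_pos g, ?_⟩
    simp [hP, pow_orderOf_eq_one]
  set t := Nat.find hex with htdef
  obtain ⟨ht0, htL⟩ : 0 < t ∧ P t = L := Nat.find_spec hex
  have hmin : ∀ k, 0 < k → k < t → P k ≠ L := by
    intro k hk hkt hPk
    exact Nat.find_min hex hkt ⟨hk, hPk⟩
  have hdvd : ∀ k, P k = L ↔ t ∣ k := by
    intro k
    constructor
    · intro hPk
      rcases Nat.eq_zero_or_pos (k % t) with hr | hr
      · exact Nat.dvd_of_mod_eq_zero hr
      · exfalso
        have hmul : ∀ m : ℕ, P (t * m) = L := by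
          intro m
          induction m with
          | zero => simpa using hP0
          | succ n ih =>
            have : Finset.image ⇑(g^(t*n)) (P t) = P (t*n + t) := himg (t*n) t
            rw [htL] at this
            rw [show t * (n+1) = t*n + t by ring, ← this]
            show Finset.image ⇑(g^(t*n)) L = L
            have := himg (t*n) 0
            rw [hP0] at this
            rw [this, Nat.add_zero]
            exact ih
        have h1 : P (t * (k / t) + k % t) = L := by
          rw [show t * (k / t) + k % t = k from Nat.div_add_mod k t]
          exact hPk
        have h2 : Finset.image ⇑(g^(t * (k/t))) (P (k % t)) = P (t * (k/t) + k % t) :=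
          himg _ _
        have h3 : Finset.image ⇑(g^(t * (k/t))) L = L := by
          have := himg (t * (k/t)) 0
          rw [hP0, Nat.add_zero] at this
          rw [this]; exact hmul _
        have : Finset.image ⇑(g^(t * (k/t))) (P (k % t)) = Finset.image ⇑(g^(t * (k/t))) L := by
          rw [h2, h1, h3]
        exact hmin _ hr (Nat.mod_lt _ ht0) (hcancel _ _ _ this)
    · rintro ⟨m, rfl⟩
      induction m with
      | zero => simpa using hP0
      | succ n ih =>
        have : Finset.image ⇑(g^(t*n)) (P t) = P (t*n + t) := himg (t*n) t
        rw [htL] at this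
        rw [show t * (n+1) = t*n + t by ring, ← this]
        have h0 := himg (t*n) 0
        rw [hP0, Nat.add_zero] at h0
        show Finset.image ⇑(g^(t*n)) L = L
        exact h0.trans ih
  have hmeet2 : ∀ m n, (P (m + n) ∩ P n).Nonempty → P m = L := by
    intro m n hne
    have himage : P (m + n) ∩ P n = Finset.image ⇑(g^n) (P m ∩ L) := by
      rw [Finset.image_inter _ _ (Equiv.injective _), himg n m, Nat.add_comm n m]
    rw [himage] at hne
    obtain ⟨x, hx⟩ := hne
    obtain ⟨y, hy, rfl⟩ := Finset.mem_image.mp hx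
    exact hmeet m ⟨y, hy⟩
  -- U and its properties
  set U : Finset Ω := (Finset.range t).biUnion P with hU
  have hdisjP : ∀ i ∈ Finset.range t, ∀ j ∈ Finset.range t, i ≠ j → Disjoint (P i) (P j) := by
    have key : ∀ i j, i < j → j < t → Disjoint (P j) (P i) := by
      intro i j hij hjt
      rw [Finset.disjoint_left]
      intro x hxj hxi
      have : (P ((j - i) + i) ∩ P i).Nonempty := by
        rw [show j - i + i = j by omega]
        exact ⟨x, Finset.mem_inter.mpr ⟨hxj, hxi⟩⟩
      have := hmeet2 _ _ this
      exact hmin (j - i) (by omega) (by omega) this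
    intro i hi j hj hij
    simp only [Finset.mem_range] at hi hj
    rcases Nat.lt_or_ge i j with h | h
    · exact (key i j h hj).symm
    · exact key j i (by omega) hi
  have hUcard : U.card = t * L.card := by
    rw [hU, Finset.card_biUnion hdisjP]
    rw [Finset.sum_congr rfl (fun i _ => hPcard i), Finset.sum_const, Finset.card_range,
      smul_eq_mul]
  have hUpow : ∀ (k : ℕ) (x : Ω), x ∈ U → (g^k) x ∈ U := by
    have h1 : ∀ x ∈ U, g x ∈ U := by
      intro x hx
      obtain ⟨i, hi, hxi⟩ := Finset.mem_biUnion.mp hx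
      simp only [Finset.mem_range] at hi
      have hgx : g x ∈ P (1 + i) := by
        rw [← himg 1 i]
        rw [pow_one]
        exact Finset.mem_image_of_mem _ hxi
      rcases Nat.lt_or_ge (1 + i) t with h | h
      · exact Finset.mem_biUnion.mpr ⟨1 + i, Finset.mem_range.mpr h, hgx⟩
      · have h1i : 1 + i = t := by omega
        rw [h1i, htL] at hgx
        refine Finset.mem_biUnion.mpr ⟨0, Finset.mem_range.mpr ht0, ?_⟩
        rw [hP0]; exact hgx
    intro k
    induction k with
    | zero => intro x hx; simpa using hx
    | succ n ih =>
      intro x hx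
      rw [pow_succ']
      exact h1 _ (ih x hx)
  have hdivU : ∀ (ℓ : ℕ) (x : Ω), x ∈ U → (g^ℓ) x = x → t ∣ ℓ := by
    intro ℓ x hx hfix
    obtain ⟨i, hi, hxi⟩ := Finset.mem_biUnion.mp hx
    have hx2 : x ∈ P (ℓ + i) := by
      rw [← himg ℓ i, ← hfix]
      exact Finset.mem_image_of_mem _ hxi
    have := hmeet2 ℓ i ⟨x, Finset.mem_inter.mpr ⟨hx2, hxi⟩⟩
    exact (hdvd ℓ).mp this
  have hcycsub : ∀ x ∈ U, ∀ y, g.SameCycle x y → y ∈ U := by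
    intro x hx y hxy
    obtain ⟨i, _, rfl⟩ := hxy.exists_pow_eq'
    exact hUpow i x hx
  -- decomposition
  set Fix : Finset Ω := U.filter (fun x => g x = x) with hFix
  set Mov : Finset Ω := U.filter (fun x => ¬ g x = x) with hMov
  set C : Finset (Equiv.Perm Ω) := g.cycleFactorsFinset.filter (fun f => f.support ⊆ U) with hC
  have hMovC : Mov = C.biUnion Equiv.Perm.support := by
    ext x
    constructor
    · intro hxMov
      obtain ⟨hxU, hgx⟩ := Finset.mem_filter.mp hxMov
      have hxs : x ∈ g.support := Equiv.Perm.mem_support.mpr hgx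
      refine Finset.mem_biUnion.mpr ⟨g.cycleOf x, Finset.mem_filter.mpr
        ⟨cycleOf_mem_cycleFactorsFinset_iff.mpr hxs, ?_⟩, ?_⟩
      · intro y hy
        exact hcycsub x hxU y ((mem_support_cycleOf_iff.mp hy).1)
      · exact mem_support_cycleOf_iff.mpr ⟨Equiv.Perm.SameCycle.refl _ _, hxs⟩
    · intro hxB
      obtain ⟨f, hf, hxf⟩ := Finset.mem_biUnion.mp hxB
      obtain ⟨hfmem, hfsub⟩ := Finset.mem_filter.mp hf
      refine Finset.mem_filter.mpr ⟨hfsub hxf, ?_⟩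
      exact Equiv.Perm.mem_support.mp (mem_cycleFactorsFinset_support_le hfmem hxf)
  have hsupdisj : ∀ f ∈ C, ∀ f' ∈ C, f ≠ f' → Disjoint f.support f'.support := by
    intro f hf f' hf' hne
    have h1 := Finset.mem_filter.mp hf
    have h2 := Finset.mem_filter.mp hf'
    exact Equiv.Perm.Disjoint.disjoint_support
      (cycleFactorsFinset_pairwise_disjoint g h1.1 h2.1 hne)
  have hMovcard : Mov.card = ∑ f ∈ C, f.support.card := by
    rw [hMovC, Finset.card_biUnion hsupdisj]
  have hUsplit : Mov.card + Fix.card = U.card := by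
    have h := Finset.card_filter_add_card_filter_not (s := U) (p := fun x => g x = x)
    have h2 : Fix.card + Mov.card = U.card := h
    omega
  refine ⟨t, C.val.map (fun f => f.support.card) + Multiset.replicate Fix.card 1, ht0, ?_, ?_, ?_⟩
  · -- S ≤ fullCycleType g
    unfold fullCycleType
    apply add_le_add
    · rw [Equiv.Perm.cycleType]
      have hval : C.val ≤ g.cycleFactorsFinset.val := by
        rw [hC, Finset.filter_val]
        exact Multiset.filter_le _ _
      exact Multiset.map_le_map hval
    · rw [Multiset.replicate_le_replicate]
      have hsub : Fix ⊆ g.supportᶜ := by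
        intro x hx
        simp only [hFix, Finset.mem_filter] at hx
        simp [Equiv.Perm.mem_support, hx.2]
      calc Fix.card ≤ g.supportᶜ.card := Finset.card_le_card hsub
        _ = Fintype.card Ω - g.support.card := Finset.card_compl _
  · -- sum
    rw [Multiset.sum_add, Multiset.sum_replicate, smul_eq_mul, mul_one]
    rw [show (C.val.map (fun f => f.support.card)).sum = ∑ f ∈ C, f.support.card from rfl]
    rw [← hMovcard, hUsplit, hUcard]
  · -- divisibility
    intro ℓ hℓ
    rcases Multiset.mem_add.mp hℓ with h | h
    · obtain ⟨f, hf, rfl⟩ := Multiset.mem_map.mp h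
      have hfC : f ∈ C := hf
      obtain ⟨hfmem, hfsub⟩ := Finset.mem_filter.mp hfC
      have hcyc : f.IsCycle := (mem_cycleFactorsFinset_iff.mp hfmem).1
      obtain ⟨x, hx, -⟩ := hcyc
      have hxs : x ∈ f.support := Equiv.Perm.mem_support.mpr hx
      have hfeq : f = g.cycleOf x := cycle_is_cycleOf hxs hfmem
      have hxU : x ∈ U := hfsub hxs
      have hfixpow : (g ^ f.support.card) x = x := by
        have := pow_mod_card_support_cycleOf_self_apply g f.support.card x
        rw [← hfeq] at this
        rw [Nat.mod_self] at this
        simpa using this.symm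
      exact hdivU _ x hxU hfixpow
    · have hℓ1 : ℓ = 1 := Multiset.eq_of_mem_replicate h
      subst hℓ1
      have hFixne : Fix.Nonempty := by
        by_contra hne
        rw [Finset.not_nonempty_iff_eq_empty] at hne
        rw [hne] at h
        simp at h
      obtain ⟨x, hx⟩ := hFixne
      obtain ⟨hxU, hgx⟩ := Finset.mem_filter.mp hx
      exact hdivU 1 x hxU (by simpa using hgx)

end Helpers

/-- A transitive permutation group of odd degree `d` containing a permutation
with cycle type `[d-2c, c, c]`, where `gcd(d,c) = 1` and `d - 2c ≥ 1`, is primitive. -/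
theorem statement_0 {Ω : Type*} [Fintype Ω] [DecidableEq Ω] (d c : ℕ)
    (hcard : Fintype.card Ω = d) (hd : Odd d) (hdpos : 0 < d) (hcpos : 0 < c)
    (hgcd : Nat.gcd d c = 1) (hdc : 2 * c < d)
    (G : Subgroup (Equiv.Perm Ω)) (htrans : SubgroupTransitive G)
    (hg : ∃ g ∈ G, fullCycleType g = ({d - 2 * c, c, c} : Multiset ℕ)) :
    SubgroupPrimitive G := by
  classical
  refine ⟨htrans, ?_⟩
  intro Λ hΛ
  by_contra hTriv
  obtain ⟨hne, hblock⟩ := hΛ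
  have hnotsing : ¬ ∃ x, Λ = ({x} : Set Ω) := fun h => hTriv (Or.inl h)
  have hnotuniv : Λ ≠ Set.univ := fun h => hTriv (Or.inr h)
  obtain ⟨g, hgG, hgt⟩ := hg
  have hbdvd : Λ.ncard ∣ d := by
    have := ncard_dvd_of_block G htrans Λ hne hblock
    rwa [hcard] at this
  classical
  set b := Λ.ncard with hbdef
  have hfin : Λ.Finite := Λ.toFinite
  have hb2 : 2 ≤ b := by
    obtain ⟨x, hx⟩ := hne
    by_contra hle
    have hb1 : Λ.ncard ≤ 1 := by omega
    apply hnotsing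
    refine ⟨x, ?_⟩
    have hone := (Set.ncard_le_one hfin).mp hb1
    ext y
    simp only [Set.mem_singleton_iff]
    exact ⟨fun hy => hone y hy x hx, fun hy => hy ▸ hx⟩
  have hblt : b < d := by
    have hsub : Λ ⊂ Set.univ := Set.ssubset_univ_iff.mpr hnotuniv
    have := Set.ncard_lt_ncard hsub Set.finite_univ
    rwa [Set.ncard_univ, Nat.card_eq_fintype_card, hcard] at this
  set L : Finset Ω := Λ.toFinset with hLdef
  have hLcard : L.card = b := (Set.ncard_eq_toFinset_card' Λ).symm
  have hmeet : ∀ k : ℕ, ((Finset.image ⇑(g^k) L) ∩ L).Nonempty → Finset.image ⇑(g^k) L = L := by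
    intro k hk
    have himgfin : Finset.image ⇑(g^k) L = (⇑(g^k) '' Λ).toFinset := by
      rw [Set.toFinset_image]
    rcases hblock (g^k) (pow_mem hgG k) with h | h
    · rw [himgfin]
      exact Set.toFinset_congr h
    · exfalso
      obtain ⟨x, hx⟩ := hk
      obtain ⟨hx1, hx2⟩ := Finset.mem_inter.mp hx
      rw [himgfin, Set.mem_toFinset] at hx1
      rw [hLdef, Set.mem_toFinset] at hx2
      exact Set.disjoint_left.mp h hx1 hx2
  obtain ⟨t, S, ht0, hSle, hSsum, hSdvd⟩ := block_analysis g L hmeet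
  rw [hgt] at hSle
  set a := d - 2 * c with hadef
  have had : a + 2 * c = d := by omega
  by_cases hac : a = c
  · -- degenerate: d = 3, c = 1
    have hcd : c ∣ d := ⟨3, by omega⟩
    have hgc : Nat.gcd d c = c := Nat.gcd_eq_right hcd
    have hc1 : c = 1 := by rw [hgc] at hgcd; exact hgcd
    have hd3 : d = 3 := by omega
    obtain ⟨m, hm⟩ := hbdvd
    have : b = 2 := by omega
    rw [this, hd3] at hm
    omega
  · set i := S.count a with hidef
    set j := S.count c with hjdef
    have hcount := Multiset.le_iff_count.mp hSle
    have hia : i ≤ 1 := by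
      have h := hcount a
      simp [Multiset.insert_eq_cons, Multiset.count_cons, Multiset.count_singleton, hac] at h
      omega
    have hjc : j ≤ 2 := by
      have h := hcount c
      simp [Multiset.insert_eq_cons, Multiset.count_cons, Multiset.count_singleton,
        Ne.symm hac] at h
      omega
    have hmem : ∀ x ∈ S, x = a ∨ x = c := by
      intro x hx
      have := Multiset.mem_of_le hSle hx
      simp only [Multiset.insert_eq_cons, Multiset.mem_cons, Multiset.mem_singleton] at this
      tauto
    have hSeq : S = Multiset.replicate i a + Multiset.replicate j c := by
      ext x
      rw [Multiset.count_add, Multiset.count_replicate, Multiset.count_replicate]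
      by_cases hxa : x = a
      · subst hxa
        simp [hac, Ne.symm hac, hidef]
      · by_cases hxc : x = c
        · subst hxc
          simp [hxa, Ne.symm hxa, hjdef]
        · have hxS : x ∉ S := fun h => by rcases hmem x h with h' | h' <;> contradiction
          simp [Multiset.count_eq_zero_of_notMem hxS, hxa, hxc, Ne.symm hxa, Ne.symm hxc]
    have hsum2 : t * b = i * a + j * c := by
      rw [← hLcard, ← hSsum, hSeq, Multiset.sum_add, Multiset.sum_replicate,
        Multiset.sum_replicate, smul_eq_mul, smul_eq_mul]
    have hta : 1 ≤ i → t ∣ a := fun h => hSdvd a (Multiset.count_pos.mp (by omega))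
    have htc : 1 ≤ j → t ∣ c := fun h => hSdvd c (Multiset.count_pos.mp (by omega))
    exact nt_core d c a t b i j hd hcpos hgcd had hb2 hblt hbdvd ht0 hia hjc hsum2 hta htc
end

section
/- Let ε be a p-cycle and δ a q-cycle in the symmetric group on a set Ω, and suppose the cardinality of Supp(ε) ∩ Supp(δ) is z > 1. Then the support of ε meets at most z cycles of the product εδ; that is, the number of orbits of the cyclic group ⟨εδ⟩ on Ω that intersect Supp(ε) is at most z. -/
lemma mem_orbSet_self' {Ω : Type*} (G : Subgroup (Equiv.Perm Ω)) (x : Ω) :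
    x ∈ orbSet G x := ⟨1, G.one_mem, rfl⟩

lemma orbSet_eq_of_mem' {Ω : Type*} (G : Subgroup (Equiv.Perm Ω)) {x w : Ω}
    (h : x ∈ orbSet G w) : orbSet G x = orbSet G w := by
  obtain ⟨g, hg, rfl⟩ := h
  ext y
  constructor
  · rintro ⟨h', hh, rfl⟩
    exact ⟨h' * g, G.mul_mem hh hg, rfl⟩
  · rintro ⟨h', hh, rfl⟩
    refine ⟨h' * g⁻¹, G.mul_mem hh (G.inv_mem hg), ?_⟩
    simp [Equiv.Perm.mul_apply]

lemma key' {Ω : Type*} [Fintype Ω] [DecidableEq Ω] (ε δ : Equiv.Perm Ω)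
    (hε : ε.IsCycle) (hZ : (ε.support ∩ δ.support).Nonempty)
    {x : Ω} (hx : x ∈ ε.support) :
    ∃ n : ℕ, ((ε * δ) ^ n) x ∈ ε.support ∩ δ.support := by
  obtain ⟨t, ht⟩ := hZ
  have htA : t ∈ ε.support := (Finset.mem_inter.1 ht).1
  have htB : t ∈ δ.support := (Finset.mem_inter.1 ht).2
  have hsc : ε.SameCycle x t :=
    hε.sameCycle (Equiv.Perm.mem_support.1 hx) (Equiv.Perm.mem_support.1 htA)
  obtain ⟨i, hi⟩ := hsc.exists_pow_eq'
  have hKne : ∃ k : ℕ, (ε ^ k) x ∈ δ.support := ⟨i, hi.2 ▸ htB⟩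
  classical
  let k := Nat.find hKne
  have hk : (ε ^ k) x ∈ δ.support := Nat.find_spec hKne
  have hmin : ∀ j < k, (ε ^ j) x ∉ δ.support := fun j hj => Nat.find_min hKne hj
  have claim : ∀ j ≤ k, ((ε * δ) ^ j) x = (ε ^ j) x := by
    intro j hj
    induction j with
    | zero => simp
    | succ j ih =>
      have hjk : j ≤ k := Nat.le_of_succ_le hj
      have h1 : ((ε * δ) ^ (j + 1)) x = (ε * δ) (((ε * δ) ^ j) x) := by
        rw [pow_succ', Equiv.Perm.mul_apply]
      have h2 : δ ((ε ^ j) x) = (ε ^ j) x := by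
        have := hmin j (Nat.lt_of_succ_le hj)
        rwa [Equiv.Perm.notMem_support] at this
      rw [h1, ih hjk, Equiv.Perm.mul_apply, h2, ← Equiv.Perm.mul_apply, ← pow_succ']
  refine ⟨k, Finset.mem_inter.2 ⟨?_, ?_⟩⟩
  · rw [claim k le_rfl]
    exact Equiv.Perm.pow_apply_mem_support.2 hx
  · rw [claim k le_rfl]; exact hk

/-- If `ε` is a `p`-cycle, `δ` a `q`-cycle and `|Supp ε ∩ Supp δ| = z > 1`,
then the support of `ε` meets at most `z` cycles (orbits of `⟨εδ⟩`) of `εδ`. -/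
theorem statement_11 {Ω : Type*} [Fintype Ω] [DecidableEq Ω]
    (p q z : ℕ) (ε δ : Equiv.Perm Ω)
    (hε : ε.IsCycle) (hεp : ε.support.card = p)
    (hδ : δ.IsCycle) (hδq : δ.support.card = q)
    (hz : (ε.support ∩ δ.support).card = z) (hz1 : 1 < z) :
    Set.ncard {S : Set Ω | S ∈ Set.range (orbSet (Subgroup.zpowers (ε * δ))) ∧
      (S ∩ (ε.support : Set Ω)).Nonempty} ≤ z := by
  classical
  set G := Subgroup.zpowers (ε * δ) with hG
  set Z : Set Ω := (↑(ε.support ∩ δ.support) : Set Ω) with hZdef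
  have hZne : (ε.support ∩ δ.support).Nonempty := by
    rw [← Finset.card_pos, hz]; omega
  obtain ⟨o, ho⟩ := id hZne
  -- every orbit meeting ε.support meets Z
  have hP : ∀ S ∈ {S : Set Ω | S ∈ Set.range (orbSet G) ∧
      (S ∩ (ε.support : Set Ω)).Nonempty}, (S ∩ Z).Nonempty := by
    rintro S ⟨⟨w, rfl⟩, x, hxS, hxA⟩
    obtain ⟨n, hn⟩ := key' ε δ hε hZne (by exact_mod_cast hxA)
    refine ⟨((ε * δ) ^ n) x, ?_, by exact_mod_cast hn⟩
    have hy : ((ε * δ) ^ n) x ∈ orbSet G x :=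
      ⟨(ε * δ) ^ n, Subgroup.npow_mem_zpowers _ _, rfl⟩
    rw [← orbSet_eq_of_mem' G hxS]
    exact hy
  set f : Set Ω → Ω := fun S => if h : (S ∩ Z).Nonempty then h.choose else o with hf
  have hmaps : ∀ S ∈ {S : Set Ω | S ∈ Set.range (orbSet G) ∧
      (S ∩ (ε.support : Set Ω)).Nonempty}, f S ∈ Z := by
    intro S hS
    have h := hP S hS
    simp only [hf, dif_pos h]
    exact h.choose_spec.2
  have hinj : Set.InjOn f {S : Set Ω | S ∈ Set.range (orbSet G) ∧
      (S ∩ (ε.support : Set Ω)).Nonempty} := by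
    rintro S₁ hS₁ S₂ hS₂ hfe
    have h1 := hP S₁ hS₁
    have h2 := hP S₂ hS₂
    have hy1 : f S₁ ∈ S₁ := by simp only [hf, dif_pos h1]; exact h1.choose_spec.1
    have hy2 : f S₂ ∈ S₂ := by simp only [hf, dif_pos h2]; exact h2.choose_spec.1
    obtain ⟨w₁, rfl⟩ := hS₁.1
    obtain ⟨w₂, rfl⟩ := hS₂.1
    rw [← orbSet_eq_of_mem' G hy1, ← orbSet_eq_of_mem' G hy2, hfe]
  calc Set.ncard {S : Set Ω | S ∈ Set.range (orbSet G) ∧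
      (S ∩ (ε.support : Set Ω)).Nonempty} ≤ Z.ncard :=
        Set.ncard_le_ncard_of_injOn f hmaps hinj (Z.toFinite)
    _ = z := by rw [hZdef, Set.ncard_coe_finset, hz]
end

section
/- Let d be an odd positive integer and let 𝒟 = {D₁, D₂} be partitions of d with ν(D₁) + ν(D₂) = d − 1 and gcd(D₁) ≠ 1. Let α ∈ D₁ and β ∈ D₂ be permutations of a d-element set such that ⟨α, β⟩ has exactly t orbits, and suppose there exists a permutation ω with ω² = αβ such that ⟨α, β, ω⟩ is transitive. Then αβ is the product of exactly 2t − 1 disjoint cycles; that is, the number of orbits of ⟨αβ⟩ on the d points (counting fixed points as trivial cycles) equals 2t − 1. -/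
open Equiv Equiv.Perm

set_option linter.unusedSectionVars false

namespace St12

section SetoidTools
variable {V : Type*}



noncomputable def ncl (s : Setoid V) : ℕ := Nat.card (Quotient s)

lemma ncl_le_of_le [Finite V] {s s' : Setoid V} (h : s ≤ s') : ncl s' ≤ ncl s := by
  have hsurj : Function.Surjective
      (Quotient.map' id (fun x y hxy => h hxy) : Quotient s → Quotient s') := by
    rintro ⟨x⟩; exact ⟨Quotient.mk'' x, rfl⟩
  exact Nat.card_le_card_of_surjective _ hsurj

def mergeAt (s : Setoid V) (a b : V) : Setoid V where
  r x y := s x y ∨ (s x a ∧ s b y) ∨ (s x b ∧ s a y)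
  iseqv := by
    refine ⟨fun x => Or.inl (s.refl x), ?_, ?_⟩
    · rintro x y (h | ⟨h1, h2⟩ | ⟨h1, h2⟩)
      · exact Or.inl (s.symm h)
      · exact Or.inr (Or.inr ⟨s.symm h2, s.symm h1⟩)
      · exact Or.inr (Or.inl ⟨s.symm h2, s.symm h1⟩)
    · rintro x y z (h | ⟨h1, h2⟩ | ⟨h1, h2⟩) (h' | ⟨h1', h2'⟩ | ⟨h1', h2'⟩)
      · exact Or.inl (s.trans h h')
      · exact Or.inr (Or.inl ⟨s.trans h h1', h2'⟩)
      · exact Or.inr (Or.inr ⟨s.trans h h1', h2'⟩)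
      · exact Or.inr (Or.inl ⟨h1, s.trans h2 h'⟩)
      · exact Or.inl (s.trans h1 (s.trans (s.symm (s.trans h2 h1')) h2'))
      · exact Or.inl (s.trans h1 h2')
      · exact Or.inr (Or.inr ⟨h1, s.trans h2 h'⟩)
      · exact Or.inl (s.trans h1 h2')
      · exact Or.inl (s.trans h1 (s.trans (s.symm h1') (s.trans (s.symm h2) h2')))

lemma le_mergeAt (s : Setoid V) (a b : V) : s ≤ mergeAt s a b := fun {_ _} h => Or.inl h

lemma mergeAt_rel (s : Setoid V) (a b : V) : mergeAt s a b a b :=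
  Or.inr (Or.inl ⟨s.refl a, s.refl b⟩)

lemma ncl_le_mergeAt_add_one [Finite V] (s : Setoid V) (a b : V) :
    ncl s ≤ ncl (mergeAt s a b) + 1 := by
  classical
  set m := mergeAt s a b with hm
  have wd : ∀ x y, s x y →
      (if s x b then (none : Option (Quotient m)) else some (Quotient.mk m x)) =
      (if s y b then none else some (Quotient.mk m y)) := by
    intro x y hxy
    by_cases hx : s x b
    · have hy : s y b := s.trans (s.symm hxy) hx
      rw [if_pos hx, if_pos hy]
    · have hy : ¬ s y b := fun h => hx (s.trans hxy h)
      rw [if_neg hx, if_neg hy]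
      exact congrArg some (Quotient.sound (Or.inl hxy))
  let f : Quotient s → Option (Quotient m) := Quotient.lift _ wd
  have hinj : Function.Injective f := by
    rintro ⟨x⟩ ⟨y⟩ h
    change (if s x b then _ else _) = (if s y b then _ else _) at h
    by_cases hx : s x b <;> by_cases hy : s y b
    · exact Quotient.sound (s.trans hx (s.symm hy))
    · simp [hx, hy] at h
    · simp [hx, hy] at h
    · rw [if_neg hx, if_neg hy, Option.some_inj] at h
      have := Quotient.exact h
      rcases this with h' | ⟨h1, h2⟩ | ⟨h1, h2⟩
      · exact Quotient.sound h'
      · exact absurd (s.symm h2) hy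
      · exact absurd h1 hx
  haveI : Finite (Quotient m) := Quotient.finite _
  haveI : Fintype (Quotient m) := Fintype.ofFinite _
  haveI : Finite (Option (Quotient m)) := inferInstance
  calc ncl s ≤ Nat.card (Option (Quotient m)) := Nat.card_le_card_of_injective f hinj
    _ = ncl m + 1 := Finite.card_option


end SetoidTools

section Orb
variable {Ω : Type*}



def orbSet' (G : Subgroup (Perm Ω)) (x : Ω) : Set Ω := {y | ∃ g ∈ G, g x = y}

def orbSetoid (G : Subgroup (Perm Ω)) : Setoid Ω where
  r x y := ∃ g ∈ G, g x = y
  iseqv := by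
    refine ⟨fun x => ⟨1, G.one_mem, rfl⟩, ?_, ?_⟩
    · rintro x y ⟨g, hg, rfl⟩
      exact ⟨g⁻¹, G.inv_mem hg, by simp⟩
    · rintro x y z ⟨g, hg, rfl⟩ ⟨h, hh, rfl⟩
      exact ⟨h * g, G.mul_mem hh hg, by simp⟩

lemma orbSetoid_rel {G : Subgroup (Perm Ω)} {x y : Ω} :
    orbSetoid G x y ↔ ∃ g ∈ G, g x = y := Iff.rfl

lemma orbSet'_eq_of_rel {G : Subgroup (Perm Ω)} {x y : Ω} (h : orbSetoid G x y) :
    orbSet' G x = orbSet' G y := by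
  obtain ⟨g, hg, rfl⟩ := h
  ext z
  constructor
  · rintro ⟨h', hh', rfl⟩
    exact ⟨h' * g⁻¹, G.mul_mem hh' (G.inv_mem hg), by simp⟩
  · rintro ⟨h', hh', rfl⟩
    exact ⟨h' * g, G.mul_mem hh' hg, by simp⟩

lemma numOrbits'_eq (G : Subgroup (Perm Ω)) :
    Nat.card (Set.range (orbSet' G)) = ncl (orbSetoid G) := by
  apply Nat.card_congr
  symm
  refine Equiv.ofBijective (Quotient.lift (fun x => (⟨orbSet' G x, x, rfl⟩ : Set.range (orbSet' G)))
    (fun x y h => Subtype.ext (orbSet'_eq_of_rel h))) ⟨?_, ?_⟩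
  · rintro ⟨x⟩ ⟨y⟩ h
    have hx : orbSet' G x = orbSet' G y := congrArg Subtype.val h
    have : y ∈ orbSet' G x := hx ▸ ⟨1, G.one_mem, rfl⟩
    exact Quotient.sound this
  · rintro ⟨S, x, rfl⟩
    exact ⟨Quotient.mk _ x, rfl⟩

lemma orbSetoid_mono {G H : Subgroup (Perm Ω)} (h : H ≤ G) : orbSetoid H ≤ orbSetoid G :=
  fun {_ _} ⟨g, hg, hx⟩ => ⟨g, h hg, hx⟩

/-- key: if every generator moves points within classes of `s`, orbit setoid of closure ≤ s -/
lemma orbSetoid_closure_le {S : Set (Perm Ω)} {s : Setoid Ω}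
    (h : ∀ g ∈ S, ∀ x, s x (g x)) : orbSetoid (Subgroup.closure S) ≤ s := by
  rintro x y ⟨g, hg, rfl⟩
  have key : ∀ (g : Perm Ω), g ∈ Subgroup.closure S → ∀ x, s x (g x) := by
    intro g hg
    refine Subgroup.closure_induction (p := fun g _ => ∀ x, s x (g x))
      (fun g hg x => h g hg x) (fun x => s.refl x) ?_ ?_ hg
    · intro a b _ _ ha hb x
      exact s.trans (hb x) (ha (b x))
    · intro a _ ha x
      have := ha (a⁻¹ x)
      simp only [Perm.inv_def, Equiv.apply_symm_apply] at this
      exact s.symm this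
  exact key g hg x

lemma zpow_rel_of_rel {σ : Perm Ω} {s : Setoid Ω} (h : ∀ x, s x (σ x)) :
    ∀ (k : ℤ) (x : Ω), s x ((σ ^ k) x) := by
  intro k x
  have hgen : ∀ g ∈ ({σ} : Set (Perm Ω)), ∀ x, s x (g x) := by
    intro g hg x
    rw [Set.mem_singleton_iff] at hg
    subst hg; exact h x
  have hle := orbSetoid_closure_le hgen
  have hmem : σ ^ k ∈ Subgroup.closure ({σ} : Set (Perm Ω)) :=
    Subgroup.zpow_mem _ (Subgroup.subset_closure (Set.mem_singleton σ)) k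
  have hrel : orbSetoid (Subgroup.closure ({σ} : Set (Perm Ω))) x ((σ ^ k) x) := ⟨σ ^ k, hmem, rfl⟩
  exact hle hrel


end Orb

section Perms
variable {Ω : Type*} [Fintype Ω] [DecidableEq Ω]



lemma sameCycle_pow (σ : Perm Ω) (x : Ω) (n : ℕ) : σ.SameCycle x ((σ ^ n) x) :=
  ⟨(n : ℤ), by rw [zpow_natCast]⟩

lemma sameCycle_apply (σ : Perm Ω) (x : Ω) : σ.SameCycle x (σ x) := by
  simpa using sameCycle_pow σ x 1

/-- T1: trajectory identity away from `a, b`. -/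
lemma pow_mul_swap_eq {σ : Perm Ω} {a b x : Ω} (ha : ¬ σ.SameCycle x a) (hb : ¬ σ.SameCycle x b) :
    ∀ n : ℕ, ((σ * swap a b) ^ n) x = (σ ^ n) x := by
  intro n
  induction n with
  | zero => simp
  | succ n ih =>
    have hx : σ.SameCycle x ((σ ^ n) x) := sameCycle_pow σ x n
    have hna : (σ ^ n) x ≠ a := fun h => ha (h ▸ hx)
    have hnb : (σ ^ n) x ≠ b := fun h => hb (h ▸ hx)
    rw [pow_succ', pow_succ', Perm.mul_apply, Perm.mul_apply, ih, Perm.mul_apply,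
      swap_apply_of_ne_of_ne hna hnb]

/-- merge trajectory -/
lemma traj {σ : Perm Ω} {a b : Ω} (hab : ¬ σ.SameCycle a b) :
    ∀ n : ℕ, ∃ m : ℕ, ((σ * swap a b) ^ m) (σ b) = (σ ^ n) (σ b) := by
  intro n
  induction n with
  | zero => exact ⟨0, rfl⟩
  | succ n ih =>
    obtain ⟨m, hm⟩ := ih
    set p := (σ ^ n) (σ b) with hp
    have hpb : σ.SameCycle b p := by
      have : p = (σ ^ (n + 1)) b := by rw [hp, pow_succ, Perm.mul_apply]
      rw [this]; exact sameCycle_pow σ b (n + 1)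
    have hpa : p ≠ a := fun h => hab (h ▸ hpb).symm
    have hgoal : ((σ ^ (n + 1)) (σ b)) = σ p := by rw [pow_succ', Perm.mul_apply, ← hp]
    by_cases hpb' : p = b
    · exact ⟨0, by rw [pow_zero, one_apply, hgoal, hpb']⟩
    · refine ⟨m + 1, ?_⟩
      rw [pow_succ', Perm.mul_apply, hm, hgoal, Perm.mul_apply,
        swap_apply_of_ne_of_ne hpa hpb']

lemma traj' {σ : Perm Ω} {a b : Ω} (hab : ¬ σ.SameCycle a b) :
    ∀ n : ℕ, ∃ m : ℕ, ((σ * swap a b) ^ m) (σ a) = (σ ^ n) (σ a) := by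
  have h := traj (σ := σ) (a := b) (b := a) (fun h => hab h.symm)
  simpa [swap_comm b a] using h

/-- M2 -/
lemma sameCycle_mul_swap_self {σ : Perm Ω} {a b : Ω} (hab : ¬ σ.SameCycle a b) :
    (σ * swap a b).SameCycle a b := by
  set τ := σ * swap a b with hτ
  have h1 : τ.SameCycle a (σ b) := by
    have : τ a = σ b := by rw [hτ, Perm.mul_apply, swap_apply_left]
    exact this ▸ sameCycle_apply τ a
  have h2 : σ.SameCycle (σ b) b := (sameCycle_apply σ b).symm
  obtain ⟨i, _, _, hi⟩ := h2.exists_pow_eq σ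
  obtain ⟨m, hm⟩ := traj hab i
  have h3 : τ.SameCycle (σ b) b := ⟨(m : ℤ), by rw [zpow_natCast, hm, hi]⟩
  exact h1.trans h3

lemma helper_a {σ : Perm Ω} {a b : Ω} (hab : ¬ σ.SameCycle a b) {z : Ω}
    (h : σ.SameCycle a z) : (σ * swap a b).SameCycle (σ a) z := by
  set τ := σ * swap a b with hτ
  obtain ⟨i, hi0, _, hi⟩ := h.exists_pow_eq σ
  rcases Nat.exists_eq_add_of_lt hi0 with ⟨k, hk⟩
  -- i = 0 + k + 1
  have hik : i = k + 1 := by omega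
  subst hik
  have : (σ ^ (k + 1)) a = (σ ^ k) (σ a) := by
    rw [pow_succ, Perm.mul_apply]
  obtain ⟨m, hm⟩ := traj' hab k
  exact ⟨(m : ℤ), by rw [zpow_natCast, hm, ← this, hi]⟩

lemma helper_b {σ : Perm Ω} {a b : Ω} (hab : ¬ σ.SameCycle a b) {z : Ω}
    (h : σ.SameCycle b z) : (σ * swap a b).SameCycle (σ b) z := by
  set τ := σ * swap a b with hτ
  obtain ⟨i, hi0, _, hi⟩ := h.exists_pow_eq σ
  rcases Nat.exists_eq_add_of_lt hi0 with ⟨k, hk⟩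
  have hik : i = k + 1 := by omega
  subst hik
  have : (σ ^ (k + 1)) b = (σ ^ k) (σ b) := by
    rw [pow_succ, Perm.mul_apply]
  obtain ⟨m, hm⟩ := traj hab k
  exact ⟨(m : ℤ), by rw [zpow_natCast, hm, ← this, hi]⟩

/-- M1 -/
lemma sameCycle_mul_swap_of_sameCycle {σ : Perm Ω} {a b : Ω} (hab : ¬ σ.SameCycle a b)
    {x y : Ω} (h : σ.SameCycle x y) : (σ * swap a b).SameCycle x y := by
  set τ := σ * swap a b with hτ
  by_cases hxa : σ.SameCycle x a
  · have hx : τ.SameCycle (σ a) x := helper_a hab hxa.symm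
    have hy : τ.SameCycle (σ a) y := helper_a hab (hxa.symm.trans h)
    exact hx.symm.trans hy
  · by_cases hxb : σ.SameCycle x b
    · have hx : τ.SameCycle (σ b) x := helper_b hab hxb.symm
      have hy : τ.SameCycle (σ b) y := helper_b hab (hxb.symm.trans h)
      exact hx.symm.trans hy
    · obtain ⟨i, _, _, hi⟩ := h.exists_pow_eq σ
      exact ⟨(i : ℤ), by rw [zpow_natCast, pow_mul_swap_eq hxa hxb i, hi]⟩


end Perms

section Counting
variable {Ω : Type*} [Fintype Ω] [DecidableEq Ω]

def cyc (σ : Perm Ω) : Setoid Ω := orbSetoid (Subgroup.zpowers σ)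

lemma cyc_rel {σ : Perm Ω} {x y : Ω} : cyc σ x y ↔ σ.SameCycle x y := by
  constructor
  · rintro ⟨g, hg, rfl⟩
    obtain ⟨k, rfl⟩ := Subgroup.mem_zpowers_iff.mp hg
    exact ⟨k, rfl⟩
  · rintro ⟨k, hk⟩
    exact ⟨σ ^ k, Subgroup.zpow_mem _ (Subgroup.mem_zpowers σ) k, hk⟩

noncomputable def cc (σ : Perm Ω) : ℕ := ncl (cyc σ)

lemma cc_le_card (σ : Perm Ω) : cc σ ≤ Fintype.card Ω := by
  have hs : Function.Surjective (Quotient.mk (cyc σ)) := fun q => ⟨q.out, Quotient.out_eq q⟩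
  have := Nat.card_le_card_of_surjective _ hs
  simpa [cc, ncl, Nat.card_eq_fintype_card] using this

lemma cc_one : cc (1 : Perm Ω) = Fintype.card Ω := by
  rw [cc, ncl, ← Nat.card_eq_fintype_card]
  apply Nat.card_congr
  refine Equiv.ofBijective (Quotient.lift (fun x : Ω => x) ?_) ⟨?_, ?_⟩
  · intro x y h
    obtain ⟨k, hk⟩ := cyc_rel.mp h
    simpa using hk
  · rintro ⟨x⟩ ⟨y⟩ h
    change x = y at h
    subst h
    rfl
  · intro x; exact ⟨Quotient.mk _ x, rfl⟩

/-- C2 : multiplying by a swap joining two distinct cycles strictly decreases the cycle count. -/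
lemma cc_mul_swap_add_one_le {σ : Perm Ω} {a b : Ω} (hab : ¬ σ.SameCycle a b) :
    cc (σ * swap a b) + 1 ≤ cc σ := by
  classical
  haveI : Finite (Quotient (cyc σ)) := Quotient.finite _
  haveI : Finite (Quotient (cyc (σ * swap a b))) := Quotient.finite _
  haveI : Fintype (Quotient (cyc σ)) := Fintype.ofFinite _
  haveI : Fintype (Quotient (cyc (σ * swap a b))) := Fintype.ofFinite _
  set τ := σ * swap a b with hτ
  let F : Quotient (cyc σ) → Quotient (cyc τ) :=
    Quotient.map' id (fun x y h => cyc_rel.mpr (sameCycle_mul_swap_of_sameCycle hab (cyc_rel.mp h)))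
  have hsurj : Function.Surjective F := by rintro ⟨x⟩; exact ⟨Quotient.mk _ x, rfl⟩
  have hninj : ¬ Function.Injective F := by
    intro hinj
    have hF : F (Quotient.mk _ a) = F (Quotient.mk _ b) := by
      show Quotient.mk (cyc τ) a = Quotient.mk (cyc τ) b
      exact Quotient.sound (cyc_rel.mpr (sameCycle_mul_swap_self hab))
    exact hab (cyc_rel.mp (Quotient.exact (hinj hF)))
  have hlt := Fintype.card_lt_of_surjective_not_injective F hsurj hninj
  have e1 : cc τ = Fintype.card (Quotient (cyc τ)) := by rw [cc, ncl, Nat.card_eq_fintype_card]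
  have e2 : cc σ = Fintype.card (Quotient (cyc σ)) := by rw [cc, ncl, Nat.card_eq_fintype_card]
  omega

lemma sameCycle_iff_of_not {σ : Perm Ω} {a b x y : Ω}
    (ha : ¬ σ.SameCycle x a) (hb : ¬ σ.SameCycle x b) :
    (σ * swap a b).SameCycle x y ↔ σ.SameCycle x y := by
  constructor
  · rintro h
    obtain ⟨i, _, _, hi⟩ := h.exists_pow_eq (σ * swap a b)
    exact ⟨(i : ℤ), by rw [zpow_natCast, ← pow_mul_swap_eq ha hb i, hi]⟩
  · intro h
    obtain ⟨i, _, _, hi⟩ := h.exists_pow_eq σ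
    exact ⟨(i : ℤ), by rw [zpow_natCast, pow_mul_swap_eq ha hb i, hi]⟩

/-- split trajectory -/
lemma helper_split {σ : Perm Ω} {a b : Ω} {z : Ω}
    (h : σ.SameCycle a z) : (σ * swap a b).SameCycle (σ a) z ∨ (σ * swap a b).SameCycle (σ b) z := by
  set τ := σ * swap a b with hτ
  have key : ∀ n : ℕ, τ.SameCycle (σ a) ((σ ^ n) (σ a)) ∨ τ.SameCycle (σ b) ((σ ^ n) (σ a)) := by
    intro n
    induction n with
    | zero => exact Or.inl (by rw [pow_zero, one_apply])
    | succ n ih =>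
      set p := (σ ^ n) (σ a) with hp
      have hstep : (σ ^ (n + 1)) (σ a) = σ p := by rw [pow_succ', Perm.mul_apply]
      by_cases hpa : p = a
      · exact Or.inl (by rw [hstep, hpa])
      · by_cases hpb : p = b
        · exact Or.inr (by rw [hstep, hpb])
        · have hτp : τ p = σ p := by rw [hτ, Perm.mul_apply, swap_apply_of_ne_of_ne hpa hpb]
          rcases ih with h' | h'
          · exact Or.inl (by rw [hstep, ← hτp]; exact h'.trans (sameCycle_apply τ p))
          · exact Or.inr (by rw [hstep, ← hτp]; exact h'.trans (sameCycle_apply τ p))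
  obtain ⟨i, hi0, _, hi⟩ := h.exists_pow_eq σ
  rcases Nat.exists_eq_add_of_lt hi0 with ⟨k, hk⟩
  have hik : i = k + 1 := by omega
  subst hik
  have : (σ ^ (k + 1)) a = (σ ^ k) (σ a) := by rw [pow_succ, Perm.mul_apply]
  rw [← hi, this]
  exact key k

/-- C3 : multiplying by any swap increases the cycle count by at most one. -/
lemma cc_mul_swap_le {σ : Perm Ω} {a b : Ω} (hab : a ≠ b) :
    cc (σ * swap a b) ≤ cc σ + 1 := by
  classical
  by_cases hs : σ.SameCycle a b
  swap
  · have := cc_mul_swap_add_one_le hs; omega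
  haveI : Finite (Quotient (cyc σ)) := Quotient.finite _
  haveI : Fintype (Quotient (cyc σ)) := Fintype.ofFinite _
  set τ := σ * swap a b with hτ
  have hsplitcov : ∀ z, σ.SameCycle a z → τ.SameCycle (σ a) z ∨ τ.SameCycle (σ b) z :=
    fun z h => helper_split h
  -- third-branch points have σ-class avoiding a and b
  have havoid : ∀ x, ¬ τ.SameCycle (σ a) x → ¬ τ.SameCycle (σ b) x → ¬ σ.SameCycle x a := by
    intro x h1 h2 hxa
    rcases hsplitcov x hxa.symm with h | h
    · exact h1 h
    · exact h2 h
  have havoid' : ∀ x, ¬ τ.SameCycle (σ a) x → ¬ τ.SameCycle (σ b) x → ¬ σ.SameCycle x b := by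
    intro x h1 h2 hxb
    exact havoid x h1 h2 (hxb.trans hs.symm)
  let f : Ω → Option (Quotient (cyc σ)) := fun x =>
    if τ.SameCycle (σ a) x then some (Quotient.mk _ a)
    else if τ.SameCycle (σ b) x then none
    else some (Quotient.mk _ x)
  have wd : ∀ x y, cyc τ x y → f x = f y := by
    intro x y hxy
    have hxy' : τ.SameCycle x y := cyc_rel.mp hxy
    by_cases h1 : τ.SameCycle (σ a) x
    · rw [show f x = some (Quotient.mk _ a) from if_pos h1,
        show f y = some (Quotient.mk _ a) from if_pos (h1.trans hxy')]
    · by_cases h2 : τ.SameCycle (σ b) x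
      · have h1y : ¬ τ.SameCycle (σ a) y := fun h => h1 (h.trans hxy'.symm)
        rw [show f x = none from by simp only [f, if_neg h1, if_pos h2],
          show f y = none from by simp only [f, if_neg h1y, if_pos (h2.trans hxy')]]
      · have h1y : ¬ τ.SameCycle (σ a) y := fun h => h1 (h.trans hxy'.symm)
        have h2y : ¬ τ.SameCycle (σ b) y := fun h => h2 (h.trans hxy'.symm)
        have hxa := havoid x h1 h2
        have hxb := havoid' x h1 h2
        have : σ.SameCycle x y := (sameCycle_iff_of_not hxa hxb).mp hxy'
        simp only [f, if_neg h1, if_neg h2, if_neg h1y, if_neg h2y]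
        exact congrArg some (Quotient.sound (cyc_rel.mpr this))
  let J : Quotient (cyc τ) → Option (Quotient (cyc σ)) := Quotient.lift f wd
  have hinj : Function.Injective J := by
    rintro ⟨x⟩ ⟨y⟩ h
    change f x = f y at h
    refine Quotient.sound (cyc_rel.mpr ?_)
    by_cases h1 : τ.SameCycle (σ a) x <;> by_cases h1y : τ.SameCycle (σ a) y
    · exact h1.symm.trans h1y
    · -- f x = some ⟦a⟧, y in branch 2 or 3
      exfalso
      by_cases h2y : τ.SameCycle (σ b) y
      · rw [show f x = some (Quotient.mk _ a) from if_pos h1,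
          show f y = none from by simp only [f, if_neg h1y, if_pos h2y]] at h
        exact nomatch h
      · rw [show f x = some (Quotient.mk _ a) from if_pos h1,
          show f y = some (Quotient.mk _ y) from by simp only [f, if_neg h1y, if_neg h2y]] at h
        have := cyc_rel.mp (Quotient.exact (Option.some_injective _ h))
        exact havoid y h1y h2y this.symm
    · exfalso
      by_cases h2 : τ.SameCycle (σ b) x
      · rw [show f x = none from by simp only [f, if_neg h1, if_pos h2],
          show f y = some (Quotient.mk _ a) from if_pos h1y] at h
        exact nomatch h
      · rw [show f y = some (Quotient.mk _ a) from if_pos h1y,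
          show f x = some (Quotient.mk _ x) from by simp only [f, if_neg h1, if_neg h2]] at h
        have := cyc_rel.mp (Quotient.exact (Option.some_injective _ h))
        exact havoid x h1 h2 this
    · by_cases h2 : τ.SameCycle (σ b) x <;> by_cases h2y : τ.SameCycle (σ b) y
      · exact h2.symm.trans h2y
      · exfalso
        rw [show f x = none from by simp only [f, if_neg h1, if_pos h2],
          show f y = some (Quotient.mk _ y) from by simp only [f, if_neg h1y, if_neg h2y]] at h
        exact nomatch h
      · exfalso
        rw [show f y = none from by simp only [f, if_neg h1y, if_pos h2y],
          show f x = some (Quotient.mk _ x) from by simp only [f, if_neg h1, if_neg h2]] at h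
        exact nomatch h
      · rw [show f x = some (Quotient.mk _ x) from by simp only [f, if_neg h1, if_neg h2],
          show f y = some (Quotient.mk _ y) from by simp only [f, if_neg h1y, if_neg h2y]] at h
        have hσ := cyc_rel.mp (Quotient.exact (Option.some_injective _ h))
        exact (sameCycle_iff_of_not (havoid x h1 h2) (havoid' x h1 h2)).mpr hσ
  have := Nat.card_le_card_of_injective J hinj
  calc cc τ ≤ Nat.card (Option (Quotient (cyc σ))) := this
    _ = cc σ + 1 := Finite.card_option

end Counting

section Factor
variable {Ω : Type*} [Fintype Ω] [DecidableEq Ω]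

lemma cc_lt_card_of_ne_one {σ : Perm Ω} (h : σ ≠ 1) : cc σ < Fintype.card Ω := by
  classical
  rcases lt_or_eq_of_le (cc_le_card σ) with hlt | heq
  · exact hlt
  exfalso
  haveI : Finite (Quotient (cyc σ)) := Quotient.finite _
  haveI : Fintype (Quotient (cyc σ)) := Fintype.ofFinite _
  have hcards : Fintype.card (Quotient (cyc σ)) = Fintype.card Ω := by
    rw [← Nat.card_eq_fintype_card, ← ncl]; exact heq
  obtain ⟨e⟩ := Fintype.card_eq.mp hcards
  have hsurj : Function.Surjective (fun x : Ω => e (Quotient.mk (cyc σ) x)) := by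
    intro y
    refine ⟨(e.symm y).out, ?_⟩
    simp [Quotient.out_eq]
  have hinj := Finite.injective_iff_surjective.mpr hsurj
  apply h
  ext x
  have hq : Quotient.mk (cyc σ) (σ x) = Quotient.mk (cyc σ) x :=
    Quotient.sound ((cyc σ).symm (cyc_rel.mpr (sameCycle_apply σ x)))
  have hxx : σ x = x := hinj (congrArg e hq)
  simpa using hxx

lemma exists_swap_factorization (σ : Perm Ω) :
    ∃ L : List (Perm Ω), L.prod = σ ∧ L.length + cc σ ≤ Fintype.card Ω ∧
      (∀ τ ∈ L, ∃ a b : Ω, a ≠ b ∧ σ.SameCycle a b ∧ τ = swap a b) := by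
  classical
  suffices H : ∀ (n : ℕ) (σ : Perm Ω), Fintype.card Ω - cc σ ≤ n →
      ∃ L : List (Perm Ω), L.prod = σ ∧ L.length + cc σ ≤ Fintype.card Ω ∧
      (∀ τ ∈ L, ∃ a b : Ω, a ≠ b ∧ σ.SameCycle a b ∧ τ = swap a b) by
    exact H (Fintype.card Ω - cc σ) σ le_rfl
  intro n
  induction n with
  | zero =>
    intro σ hσ
    have h1 : σ = 1 := by
      by_contra h
      have := cc_lt_card_of_ne_one h
      omega
    subst h1
    exact ⟨[], rfl, by simp [cc_one], by simp⟩
  | succ n ih =>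
    intro σ hσ
    by_cases h1 : σ = 1
    · subst h1
      exact ⟨[], rfl, by simp [cc_one], by simp⟩
    have hex : ∃ a : Ω, σ a ≠ a := by
      by_contra h
      push_neg at h
      exact h1 (Equiv.ext h)
    obtain ⟨a, ha⟩ := hex
    set b := σ a with hb
    have hab : a ≠ b := fun h => ha h.symm
    set σ' := σ * swap a b with hσ'
    have hfix : σ' b = b := by
      rw [hσ', Perm.mul_apply, swap_apply_right, hb]
    have hσback : σ' * swap a b = σ := by
      rw [hσ', mul_assoc, swap_mul_self, mul_one]
    have hnsc : ¬ σ'.SameCycle a b := by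
      intro h
      obtain ⟨i, _, _, hi⟩ := h.symm.exists_pow_eq σ'
      have : (σ' ^ i) b = b := by
        have := zpow_apply_eq_self_of_apply_eq_self hfix (i : ℤ)
        rwa [zpow_natCast] at this
      exact hab (hi ▸ this)
    have hcc : cc σ + 1 ≤ cc σ' := by
      have := cc_mul_swap_add_one_le hnsc
      rwa [hσback] at this
    have hccle := cc_le_card σ'
    have hmeas : Fintype.card Ω - cc σ' ≤ n := by omega
    obtain ⟨L', hprod, hlen, hmem⟩ := ih σ' hmeas
    -- preservation : σ'-cycles refine σ-cycles
    have hpres0 : ∀ x, cyc σ x (σ' x) := by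
      intro x
      by_cases hxa : x = a
      · rw [hxa]
        have : σ' a = (σ ^ 2) a := by
          rw [hσ', Perm.mul_apply, swap_apply_left, hb, pow_two, Perm.mul_apply]
        rw [this]
        exact cyc_rel.mpr (sameCycle_pow σ a 2)
      · by_cases hxb : x = b
        · subst hxb
          rw [hfix]
        · have : σ' x = σ x := by rw [hσ', Perm.mul_apply, swap_apply_of_ne_of_ne hxa hxb]
          rw [this]
          exact cyc_rel.mpr (sameCycle_apply σ x)
    have hpres : ∀ x y : Ω, σ'.SameCycle x y → σ.SameCycle x y := by
      intro x y hxy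
      obtain ⟨k, hk⟩ := hxy
      have := zpow_rel_of_rel (σ := σ') (s := cyc σ) hpres0 k x
      rw [hk] at this
      exact cyc_rel.mp this
    refine ⟨L' ++ [swap a b], ?_, ?_, ?_⟩
    · rw [List.prod_append, hprod, List.prod_singleton, hσback]
    · simpa [List.length_append] using by omega
    · intro τ hτ
      rcases List.mem_append.mp hτ with h | h
      · obtain ⟨c, d, hcd, hsc, rfl⟩ := hmem τ h
        exact ⟨c, d, hcd, hpres c d hsc, rfl⟩
      · rw [List.mem_singleton] at h
        subst h
        exact ⟨a, b, hab, hb ▸ sameCycle_apply σ a, rfl⟩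

end Factor

section Ree
variable {Ω : Type*} [Fintype Ω] [DecidableEq Ω]

lemma ncl_orbSetoid_bot : ncl (orbSetoid (⊥ : Subgroup (Perm Ω))) = Fintype.card Ω := by
  have h := cc_one (Ω := Ω)
  rw [cc, cyc, Subgroup.zpowers_one_eq_bot] at h
  exact h

lemma list_swap_bound (L : List (Perm Ω))
    (hL : ∀ τ ∈ L, ∃ a b : Ω, a ≠ b ∧ τ = swap a b) :
    Fintype.card Ω + cc L.prod ≤ L.length + 2 * ncl (orbSetoid (Subgroup.closure {g | g ∈ L})) := by
  induction L using List.reverseRecOn with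
  | nil =>
    have hset : ({g | g ∈ ([] : List (Perm Ω))} : Set (Perm Ω)) = ∅ := by
      ext g; simp
    rw [List.prod_nil, cc_one, List.length_nil, hset, Subgroup.closure_empty, ncl_orbSetoid_bot]
    omega
  | append_singleton L s ih =>
    obtain ⟨a, b, hab, rfl⟩ := hL s (by simp)
    have ihL := ih (fun τ hτ => hL τ (by simp [hτ]))
    set G' := Subgroup.closure {g | g ∈ L} with hG'
    set Gf := Subgroup.closure {g | g ∈ L ++ [swap a b]} with hGf
    have hsub : G' ≤ Gf := by
      apply Subgroup.closure_mono
      intro g hg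
      simp only [Set.mem_setOf_eq, List.mem_append] at *
      exact Or.inl hg
    have hprodf : (L ++ [swap a b]).prod = L.prod * swap a b := by
      rw [List.prod_append, List.prod_singleton]
    have hlenf : (L ++ [swap a b]).length = L.length + 1 := by
      rw [List.length_append, List.length_singleton]
    have hmemL : ∀ g ∈ L, g ∈ Gf := fun g hg =>
      Subgroup.subset_closure (by simp only [Set.mem_setOf_eq, List.mem_append]; exact Or.inl hg)
    have hmems : swap a b ∈ Gf :=
      Subgroup.subset_closure (by simp only [Set.mem_setOf_eq, List.mem_append]; simp)
    by_cases hrel : orbSetoid G' a b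
    · -- generators of Gf preserve the orbit setoid of G'
      have hpres : orbSetoid Gf ≤ orbSetoid G' := by
        rw [hGf]
        apply orbSetoid_closure_le
        intro g hg x
        simp only [Set.mem_setOf_eq, List.mem_append] at hg
        rcases hg with hg | hg
        · exact ⟨g, Subgroup.subset_closure hg, rfl⟩
        · rw [List.mem_singleton] at hg
          subst hg
          by_cases hxa : x = a
          · rw [hxa, swap_apply_left]; exact hrel
          · by_cases hxb : x = b
            · rw [hxb, swap_apply_right]; exact (orbSetoid G').symm hrel
            · rw [swap_apply_of_ne_of_ne hxa hxb]
      have h1 : ncl (orbSetoid G') ≤ ncl (orbSetoid Gf) := ncl_le_of_le hpres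
      have h2 : ncl (orbSetoid Gf) ≤ ncl (orbSetoid G') := ncl_le_of_le (orbSetoid_mono hsub)
      have hcc : cc (L.prod * swap a b) ≤ cc L.prod + 1 := cc_mul_swap_le hab
      rw [hprodf, hlenf]
      omega
    · have hnsc : ¬ (L.prod).SameCycle a b := by
        intro h
        apply hrel
        obtain ⟨k, hk⟩ := h
        have hLmem : L.prod ∈ G' := Subgroup.list_prod_mem _ (fun g hg => Subgroup.subset_closure hg)
        exact ⟨L.prod ^ k, Subgroup.zpow_mem _ hLmem k, hk⟩
      have hcc : cc (L.prod * swap a b) + 1 ≤ cc L.prod := cc_mul_swap_add_one_le hnsc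
      have hmrg : orbSetoid Gf ≤ mergeAt (orbSetoid G') a b := by
        rw [hGf]
        apply orbSetoid_closure_le
        intro g hg x
        simp only [Set.mem_setOf_eq, List.mem_append] at hg
        rcases hg with hg | hg
        · exact Or.inl ⟨g, Subgroup.subset_closure hg, rfl⟩
        · rw [List.mem_singleton] at hg
          subst hg
          by_cases hxa : x = a
          · rw [hxa, swap_apply_left]; exact mergeAt_rel _ a b
          · by_cases hxb : x = b
            · rw [hxb, swap_apply_right]; exact (mergeAt (orbSetoid G') a b).symm (mergeAt_rel _ a b)
            · rw [swap_apply_of_ne_of_ne hxa hxb]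
      have h1 : ncl (mergeAt (orbSetoid G') a b) ≤ ncl (orbSetoid Gf) := ncl_le_of_le hmrg
      have h2 : ncl (orbSetoid G') ≤ ncl (mergeAt (orbSetoid G') a b) + 1 :=
        ncl_le_mergeAt_add_one _ a b
      rw [hprodf, hlenf]
      omega

lemma cc_inv (σ : Perm Ω) : cc σ⁻¹ = cc σ := by
  unfold cc cyc
  have : Subgroup.zpowers σ⁻¹ = Subgroup.zpowers σ := by
    ext g
    simp only [Subgroup.mem_zpowers_iff]
    constructor
    · rintro ⟨k, rfl⟩; exact ⟨-k, by rw [zpow_neg, ← inv_zpow]⟩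
    · rintro ⟨k, rfl⟩; exact ⟨-k, by rw [zpow_neg, ← inv_zpow, inv_inv]⟩
  rw [this]

lemma ree (α β : Perm Ω) :
    cc α + cc β + cc (α * β) ≤
      Fintype.card Ω + 2 * ncl (orbSetoid (Subgroup.closure {α, β})) := by
  obtain ⟨La, hpa, hla, hsa⟩ := exists_swap_factorization α
  obtain ⟨Lb, hpb, hlb, hsb⟩ := exists_swap_factorization β
  obtain ⟨Lc, hpc, hlc, hsc⟩ := exists_swap_factorization (α * β)⁻¹
  set L := La ++ (Lb ++ Lc) with hL
  have hprod : L.prod = 1 := by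
    rw [hL, List.prod_append, List.prod_append, hpa, hpb, hpc, ← mul_assoc, mul_inv_cancel]
  have hswap : ∀ τ ∈ L, ∃ a b : Ω, a ≠ b ∧ τ = swap a b := by
    intro τ hτ
    rw [hL, List.mem_append, List.mem_append] at hτ
    rcases hτ with h | h | h
    · obtain ⟨a, b, h1, _, h3⟩ := hsa τ h; exact ⟨a, b, h1, h3⟩
    · obtain ⟨a, b, h1, _, h3⟩ := hsb τ h; exact ⟨a, b, h1, h3⟩
    · obtain ⟨a, b, h1, _, h3⟩ := hsc τ h; exact ⟨a, b, h1, h3⟩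
  have hbound := list_swap_bound L hswap
  rw [hprod, cc_one] at hbound
  have hk : ncl (orbSetoid (Subgroup.closure {g | g ∈ L})) ≤
      ncl (orbSetoid (Subgroup.closure {α, β})) := by
    apply ncl_le_of_le
    apply orbSetoid_mono
    apply (Subgroup.closure_le _).mpr
    intro g hg
    simp only [Set.mem_insert_iff, Set.mem_singleton_iff] at hg
    rcases hg with rfl | rfl
    · rw [← hpa]
      exact Subgroup.list_prod_mem _ (fun x hx =>
        Subgroup.subset_closure (by rw [hL]; simp only [Set.mem_setOf_eq, List.mem_append]; tauto))
    · rw [← hpb]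
      exact Subgroup.list_prod_mem _ (fun x hx =>
        Subgroup.subset_closure (by rw [hL]; simp only [Set.mem_setOf_eq, List.mem_append]; tauto))
  have hlen : L.length = La.length + (Lb.length + Lc.length) := by
    rw [hL, List.length_append, List.length_append]
  have hci : cc ((α * β)⁻¹) = cc (α * β) := cc_inv (α * β)
  omega

lemma cc_eq_fullCycleType_card (σ : Perm Ω) :
    cc σ = σ.cycleType.card + (Fintype.card Ω - σ.support.card) := by
  classical
  have wd : ∀ x y : Ω, cyc σ x y →
      (if h : x ∈ σ.support then
        (Sum.inr ⟨σ.cycleOf x, (cycleOf_mem_cycleFactorsFinset_iff).mpr h⟩ :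
          ↥(σ.supportᶜ) ⊕ ↥σ.cycleFactorsFinset)
      else Sum.inl ⟨x, Finset.mem_compl.mpr h⟩) =
      (if h : y ∈ σ.support then
        Sum.inr ⟨σ.cycleOf y, (cycleOf_mem_cycleFactorsFinset_iff).mpr h⟩
      else Sum.inl ⟨y, Finset.mem_compl.mpr h⟩) := by
    intro x y hxy
    have hsc : σ.SameCycle x y := cyc_rel.mp hxy
    by_cases hx : x ∈ σ.support
    · have hy : y ∈ σ.support := by
        have : y ∈ (σ.cycleOf x).support := mem_support_cycleOf_iff.mpr ⟨hsc, hx⟩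
        exact Equiv.Perm.support_cycleOf_le σ x this
      rw [dif_pos hx, dif_pos hy]
      exact congrArg Sum.inr (Subtype.ext (hsc.cycleOf_eq))
    · have hfix : σ x = x := Equiv.Perm.notMem_support.mp hx
      obtain ⟨k, hk⟩ := hsc
      have : y = x := by rw [← hk, zpow_apply_eq_self_of_apply_eq_self hfix]
      subst this
      rfl
  have e : Quotient (cyc σ) ≃ (↥(σ.supportᶜ) ⊕ ↥σ.cycleFactorsFinset) := by
    refine Equiv.ofBijective (Quotient.lift _ wd) ⟨?_, ?_⟩
    · rintro ⟨x⟩ ⟨y⟩ h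
      change dite _ _ _ = dite _ _ _ at h
      refine Quotient.sound (cyc_rel.mpr ?_)
      by_cases hx : x ∈ σ.support <;> by_cases hy : y ∈ σ.support
      · rw [dif_pos hx, dif_pos hy] at h
        have hco : σ.cycleOf x = σ.cycleOf y := congrArg Subtype.val (Sum.inr_injective h)
        have : y ∈ (σ.cycleOf y).support := mem_support_cycleOf_iff.mpr ⟨Equiv.Perm.SameCycle.refl _ _, hy⟩
        rw [← hco] at this
        exact (mem_support_cycleOf_iff.mp this).1
      · rw [dif_pos hx, dif_neg hy] at h; exact absurd h (by simp)
      · rw [dif_neg hx, dif_pos hy] at h; exact absurd h (by simp)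
      · rw [dif_neg hx, dif_neg hy] at h
        have : x = y := congrArg Subtype.val (Sum.inl_injective h)
        rw [this]
    · rintro (⟨x, hx⟩ | ⟨c, hc⟩)
      · refine ⟨Quotient.mk _ x, ?_⟩
        have hx' : x ∉ σ.support := Finset.mem_compl.mp hx
        change dite _ _ _ = _
        rw [dif_neg hx']
      · have hcyc : c.IsCycle := (Equiv.Perm.mem_cycleFactorsFinset_iff.mp hc).1
        obtain ⟨x, hx1, -⟩ := hcyc
        have hxc : x ∈ c.support := Equiv.Perm.mem_support.mpr hx1
        have hxσ : x ∈ σ.support := Equiv.Perm.mem_cycleFactorsFinset_support_le hc hxc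
        refine ⟨Quotient.mk _ x, ?_⟩
        change dite _ _ _ = _
        rw [dif_pos hxσ]
        exact congrArg Sum.inr (Subtype.ext (Equiv.Perm.cycle_is_cycleOf hxc hc).symm)
  have hcount : cc σ = (σ.supportᶜ).card + σ.cycleFactorsFinset.card := by
    rw [cc, ncl, Nat.card_congr e, Nat.card_sum, Nat.card_eq_fintype_card,
      Nat.card_eq_fintype_card, Fintype.card_coe, Fintype.card_coe]
  rw [hcount, Finset.card_compl]
  have hct : σ.cycleType.card = σ.cycleFactorsFinset.card := by
    rw [Equiv.Perm.cycleType]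
    simp
  omega

end Ree

section Graph
variable {V : Type*} [Fintype V] [DecidableEq V]

lemma eqvgen_classes_bound (F : Finset (V × V)) :
    Fintype.card V ≤ ncl (Relation.EqvGen.setoid (fun u v => (u, v) ∈ F)) + F.card := by
  classical
  induction F using Finset.induction with
  | empty =>
    have hwd : ∀ u v : V, Relation.EqvGen (fun u v : V => (u, v) ∈ (∅ : Finset (V × V))) u v → u = v := by
      intro u v h
      induction h with
      | rel _ _ h => simp at h
      | refl => rfl
      | symm _ _ _ ih => exact ih.symm
      | trans _ _ _ _ _ ih1 ih2 => exact ih1.trans ih2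
    have : ncl (Relation.EqvGen.setoid (fun u v : V => (u, v) ∈ (∅ : Finset (V × V)))) =
        Fintype.card V := by
      rw [ncl, ← Nat.card_eq_fintype_card]
      apply Nat.card_congr
      refine Equiv.ofBijective (Quotient.lift (fun v : V => v) (fun u v h => hwd u v h)) ⟨?_, ?_⟩
      · rintro ⟨u⟩ ⟨v⟩ h
        change u = v at h
        subst h
        rfl
      · intro v; exact ⟨Quotient.mk _ v, rfl⟩
    omega
  | @insert p F hp ih =>
    obtain ⟨a, b⟩ := p
    set sF := Relation.EqvGen.setoid (fun u v : V => (u, v) ∈ F) with hsF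
    set sI := Relation.EqvGen.setoid (fun u v : V => (u, v) ∈ insert (a, b) F) with hsI
    have hle : sI ≤ mergeAt sF a b := by
      apply Setoid.eqvGen_le
      intro u v huv
      rcases Finset.mem_insert.mp huv with h | h
      · have h1 : u = a := congrArg Prod.fst h
        have h2 : v = b := congrArg Prod.snd h
        rw [h1, h2]
        exact mergeAt_rel _ a b
      · exact Or.inl (Relation.EqvGen.rel u v h)
    have h1 : ncl (mergeAt sF a b) ≤ ncl sI := ncl_le_of_le hle
    have h2 : ncl sF ≤ ncl (mergeAt sF a b) + 1 := ncl_le_mergeAt_add_one _ a b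
    have h3 : (insert (a, b) F).card = F.card + 1 := Finset.card_insert_of_notMem hp
    omega

end Graph

section Lower
variable {Ω : Type*} [Fintype Ω] [DecidableEq Ω]

lemma exists_odd_fixed (ωp : Perm Ω) (hodd : Odd (Fintype.card Ω)) :
    ∃ x : Ω, (ωp ^ 2).SameCycle x (ωp x) := by
  classical
  haveI : Fintype (Quotient (cyc ωp)) := Fintype.ofFinite _
  have hsum : Fintype.card Ω = ∑ z : Quotient (cyc ωp),
      (Finset.univ.filter (fun a : Ω => Quotient.mk (cyc ωp) a = z)).card := by
    rw [← Finset.card_univ]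
    exact Finset.card_eq_sum_card_fiberwise (fun x _ => Finset.mem_univ _)
  have hex : ∃ z : Quotient (cyc ωp),
      Odd (Finset.univ.filter (fun a : Ω => Quotient.mk (cyc ωp) a = z)).card := by
    by_contra h
    push_neg at h
    simp only [Nat.not_odd_iff_even] at h
    have heven : Even (Fintype.card Ω) := by
      rw [hsum]
      exact Finset.even_sum _ (fun z _ => h z)
    exact (Nat.not_even_iff_odd.mpr hodd) heven
  obtain ⟨z, hz⟩ := hex
  obtain ⟨x, hxz⟩ : ∃ x : Ω, Quotient.mk (cyc ωp) x = z := ⟨z.out, Quotient.out_eq z⟩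
  set m := (Finset.univ.filter (fun a : Ω => Quotient.mk (cyc ωp) a = z)).card with hm
  have hfib : ∀ y : Ω, (Quotient.mk (cyc ωp) y = z) ↔ ωp.SameCycle x y := by
    intro y
    rw [← hxz]
    constructor
    · intro h
      exact cyc_rel.mp (Quotient.exact h.symm)
    · intro h
      exact (Quotient.sound (cyc_rel.mpr h)).symm
  have hpow : (ωp ^ m) x = x := by
    by_cases hx : x ∈ ωp.support
    · have hset : (Finset.univ.filter (fun a : Ω => Quotient.mk (cyc ωp) a = z)) =
          (ωp.cycleOf x).support := by
        ext y
        simp only [Finset.mem_filter, Finset.mem_univ, true_and]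
        rw [hfib y, mem_support_cycleOf_iff]
        exact ⟨fun h => ⟨h, hx⟩, fun h => h.1⟩
      have hcyc : (ωp.cycleOf x).IsCycle := isCycle_cycleOf ωp (mem_support.mp hx)
      have horder : orderOf (ωp.cycleOf x) = m := by
        rw [hm, hset]
        exact hcyc.orderOf
      have h1 : (ωp.cycleOf x ^ m) x = x := by
        rw [← horder, pow_orderOf_eq_one, one_apply]
      rwa [cycleOf_pow_apply_self] at h1
    · have hfx : ωp x = x := notMem_support.mp hx
      have hset : (Finset.univ.filter (fun a : Ω => Quotient.mk (cyc ωp) a = z)) = {x} := by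
        ext y
        simp only [Finset.mem_filter, Finset.mem_univ, true_and, Finset.mem_singleton]
        rw [hfib y]
        constructor
        · rintro ⟨k, hk⟩
          rw [zpow_apply_eq_self_of_apply_eq_self hfx] at hk
          exact hk.symm
        · rintro rfl
          exact Equiv.Perm.SameCycle.refl _ _
      have hm1 : m = 1 := by rw [hm, hset, Finset.card_singleton]
      rw [hm1, pow_one, hfx]
  obtain ⟨l, hl⟩ := hz
  refine ⟨x, ((l + 1 : ℕ) : ℤ), ?_⟩
  rw [zpow_natCast, ← pow_mul]
  have hml : 2 * (l + 1) = m + 1 := by omega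
  rw [hml, pow_succ', Perm.mul_apply, hpow]

lemma lower_bound (α β ωp : Perm Ω) (hodd : Odd (Fintype.card Ω))
    (hω : ωp ^ 2 = α * β)
    (htrans : ∀ x y : Ω, ∃ g ∈ Subgroup.closure ({α, β, ωp} : Set (Perm Ω)), g x = y) :
    2 * ncl (orbSetoid (Subgroup.closure ({α, β} : Set (Perm Ω)))) ≤ cc (α * β) + 1 := by
  classical
  haveI : Fintype (Quotient (cyc (α * β))) := Fintype.ofFinite _
  haveI : Fintype (Quotient (orbSetoid (Subgroup.closure ({α, β} : Set (Perm Ω))))) :=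
    Fintype.ofFinite _
  haveI : Nonempty Ω := by
    rcases hodd with ⟨l, hl⟩
    exact Fintype.card_pos_iff.mp (by omega)
  have hαG : α ∈ Subgroup.closure ({α, β} : Set (Perm Ω)) := Subgroup.subset_closure (by simp)
  have hβG : β ∈ Subgroup.closure ({α, β} : Set (Perm Ω)) := Subgroup.subset_closure (by simp)
  have hγG : α * β ∈ Subgroup.closure ({α, β} : Set (Perm Ω)) := Subgroup.mul_mem _ hαG hβG
  have hcomm : ∀ k : ℤ, (α * β) ^ k * ωp = ωp * (α * β) ^ k := by
    intro k
    have hc : Commute ωp (α * β) := by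
      rw [← hω]
      exact (Commute.refl ωp).pow_right 2
    exact (hc.zpow_right k).eq.symm
  have wdι : ∀ x y : Ω, cyc (α * β) x y →
      (Quotient.mk (cyc (α * β)) (ωp x)) = (Quotient.mk (cyc (α * β)) (ωp y)) := by
    intro x y hxy
    obtain ⟨k, hk⟩ := cyc_rel.mp hxy
    refine Quotient.sound (cyc_rel.mpr ⟨k, ?_⟩)
    calc ((α * β) ^ k) (ωp x) = ((α * β) ^ k * ωp) x := rfl
      _ = (ωp * (α * β) ^ k) x := by rw [hcomm k]
      _ = ωp (((α * β) ^ k) x) := rfl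
      _ = ωp y := by rw [hk]
  let ι : Quotient (cyc (α * β)) → Quotient (cyc (α * β)) := Quotient.lift _ wdι
  have hι_mk : ∀ x : Ω, ι (Quotient.mk (cyc (α * β)) x) = Quotient.mk (cyc (α * β)) (ωp x) :=
    fun _ => rfl
  have hιι : ∀ z, ι (ι z) = z := by
    rintro ⟨x⟩
    show ι (ι (Quotient.mk (cyc (α * β)) x)) = Quotient.mk (cyc (α * β)) x
    rw [hι_mk, hι_mk]
    refine (Quotient.sound (cyc_rel.mpr ⟨(1 : ℤ), ?_⟩)).symm
    rw [zpow_one, ← hω, pow_two, Perm.mul_apply]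
  have wdq : ∀ x y : Ω, cyc (α * β) x y →
      (Quotient.mk (orbSetoid (Subgroup.closure ({α, β} : Set (Perm Ω)))) x) =
      (Quotient.mk (orbSetoid (Subgroup.closure ({α, β} : Set (Perm Ω)))) y) := by
    intro x y hxy
    obtain ⟨k, hk⟩ := cyc_rel.mp hxy
    exact Quotient.sound ⟨(α * β) ^ k, Subgroup.zpow_mem _ hγG k, hk⟩
  let q : Quotient (cyc (α * β)) → Quotient (orbSetoid (Subgroup.closure ({α, β} : Set (Perm Ω)))) :=
    Quotient.lift _ wdq
  have hq_mk : ∀ x : Ω, q (Quotient.mk (cyc (α * β)) x) =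
      Quotient.mk (orbSetoid (Subgroup.closure ({α, β} : Set (Perm Ω)))) x := fun _ => rfl
  obtain ⟨x₀, hx₀⟩ := exists_odd_fixed ωp hodd
  rw [hω] at hx₀
  have hfix0 : ι (Quotient.mk (cyc (α * β)) x₀) = Quotient.mk (cyc (α * β)) x₀ := by
    rw [hι_mk]
    exact (Quotient.sound (cyc_rel.mpr hx₀)).symm
  set Zne : Finset (Quotient (cyc (α * β))) := Finset.univ.filter (fun z => q z ≠ q (ι z)) with hZne
  set FixS : Finset (Quotient (cyc (α * β))) := Finset.univ.filter (fun z => ι z = z) with hFixS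
  set NF : Finset (Quotient (cyc (α * β))) := Finset.univ.filter (fun z => ¬ ι z = z) with hNF
  have hsplit : FixS.card + NF.card = Fintype.card (Quotient (cyc (α * β))) := by
    rw [hFixS, hNF, ← Finset.card_univ]
    exact Finset.card_filter_add_card_filter_not _
  have hFixpos : 1 ≤ FixS.card :=
    Finset.card_pos.mpr ⟨_, Finset.mem_filter.mpr ⟨Finset.mem_univ _, hfix0⟩⟩
  have hZneNF : Zne ⊆ NF := by
    intro z hz
    rw [hZne, Finset.mem_filter] at hz
    rw [hNF, Finset.mem_filter]
    exact ⟨Finset.mem_univ _, fun h => hz.2 (by rw [h])⟩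
  set E := Zne.image (fun z => (q z, q (ι z))) with hE
  have hEcard : E.card ≤ Zne.card := Finset.card_image_le
  have hEne : ∀ p ∈ E, p.1 ≠ p.2 := by
    intro p hp
    rw [hE, Finset.mem_image] at hp
    obtain ⟨z, hz, rfl⟩ := hp
    exact (Finset.mem_filter.mp hz).2
  have hEsymm : ∀ p ∈ E, (p.2, p.1) ∈ E := by
    intro p hp
    rw [hE, Finset.mem_image] at hp
    obtain ⟨z, hz, rfl⟩ := hp
    rw [hE, Finset.mem_image]
    refine ⟨ι z, ?_, by rw [hιι z]⟩
    rw [hZne, Finset.mem_filter]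
    refine ⟨Finset.mem_univ _, ?_⟩
    rw [hιι z]
    exact fun h => (Finset.mem_filter.mp hz).2 (by rw [h])
  have hrelE : ∀ x : Ω, Relation.EqvGen (fun u v => (u, v) ∈ E)
      (Quotient.mk (orbSetoid (Subgroup.closure ({α, β} : Set (Perm Ω)))) x)
      (Quotient.mk (orbSetoid (Subgroup.closure ({α, β} : Set (Perm Ω)))) (ωp x)) := by
    intro x
    by_cases h : Quotient.mk (orbSetoid (Subgroup.closure ({α, β} : Set (Perm Ω)))) x =
        Quotient.mk (orbSetoid (Subgroup.closure ({α, β} : Set (Perm Ω)))) (ωp x)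
    · rw [h]
      exact Relation.EqvGen.refl _
    · apply Relation.EqvGen.rel
      rw [hE, Finset.mem_image]
      refine ⟨Quotient.mk (cyc (α * β)) x, ?_, by rw [hι_mk, hq_mk, hq_mk]⟩
      rw [hZne, Finset.mem_filter]
      exact ⟨Finset.mem_univ _, by rw [hι_mk, hq_mk, hq_mk]; exact h⟩
  have hconn : ∀ u v : Quotient (orbSetoid (Subgroup.closure ({α, β} : Set (Perm Ω)))),
      Relation.EqvGen (fun u v => (u, v) ∈ E) u v := by
    have key : ∀ g ∈ Subgroup.closure ({α, β, ωp} : Set (Perm Ω)), ∀ x : Ω,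
        Relation.EqvGen (fun u v => (u, v) ∈ E)
          (Quotient.mk (orbSetoid (Subgroup.closure ({α, β} : Set (Perm Ω)))) x)
          (Quotient.mk (orbSetoid (Subgroup.closure ({α, β} : Set (Perm Ω)))) (g x)) := by
      intro g hg
      refine Subgroup.closure_induction
        (p := fun g _ => ∀ x : Ω, Relation.EqvGen (fun u v => (u, v) ∈ E)
          (Quotient.mk (orbSetoid (Subgroup.closure ({α, β} : Set (Perm Ω)))) x)
          (Quotient.mk (orbSetoid (Subgroup.closure ({α, β} : Set (Perm Ω)))) (g x)))
        ?_ ?_ ?_ ?_ hg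
      · intro g hgen x
        simp only [Set.mem_insert_iff, Set.mem_singleton_iff] at hgen
        rcases hgen with h | h | h
        · rw [h]
          have h' : Quotient.mk (orbSetoid (Subgroup.closure ({α, β} : Set (Perm Ω)))) x =
              Quotient.mk (orbSetoid (Subgroup.closure ({α, β} : Set (Perm Ω)))) (α x) :=
            Quotient.sound ⟨α, hαG, rfl⟩
          rw [← h']
          exact Relation.EqvGen.refl _
        · rw [h]
          have h' : Quotient.mk (orbSetoid (Subgroup.closure ({α, β} : Set (Perm Ω)))) x =
              Quotient.mk (orbSetoid (Subgroup.closure ({α, β} : Set (Perm Ω)))) (β x) :=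
            Quotient.sound ⟨β, hβG, rfl⟩
          rw [← h']
          exact Relation.EqvGen.refl _
        · rw [h]
          exact hrelE x
      · intro x
        exact Relation.EqvGen.refl _
      · intro g h _ _ hgih hhih x
        have h1 := hhih x
        have h2 := hgih (h x)
        have : (g * h) x = g (h x) := rfl
        rw [this]
        exact Relation.EqvGen.trans _ _ _ h1 h2
      · intro g _ hgih x
        have h1 := hgih (g⁻¹ x)
        rw [Perm.inv_def, Equiv.apply_symm_apply] at h1
        exact Relation.EqvGen.symm _ _ h1
    intro u v
    obtain ⟨xu, rfl⟩ := Quotient.exists_rep u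
    obtain ⟨xv, rfl⟩ := Quotient.exists_rep v
    obtain ⟨g, hg, hgx⟩ := htrans xu xv
    have := key g hg xu
    rw [hgx] at this
    exact this
  -- sorted half
  set φ := Fintype.equivFin (Quotient (orbSetoid (Subgroup.closure ({α, β} : Set (Perm Ω))))) with hφ
  set F := E.filter (fun p => (φ p.1 : ℕ) < (φ p.2 : ℕ)) with hF
  set F' := E.filter (fun p => (φ p.2 : ℕ) < (φ p.1 : ℕ)) with hF'
  have hphne : ∀ p ∈ E, (φ p.1 : ℕ) ≠ (φ p.2 : ℕ) := by
    intro p hp h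
    exact hEne p hp (φ.injective (Fin.ext h))
  have hEFF' : E.card = F.card + F'.card := by
    have h1 := Finset.card_filter_add_card_filter_not
      (s := E) (p := fun p => (φ p.1 : ℕ) < (φ p.2 : ℕ))
    have h2 : E.filter (fun p => ¬ ((φ p.1 : ℕ) < (φ p.2 : ℕ))) = F' := by
      rw [hF']
      apply Finset.filter_congr
      intro p hp
      have := hphne p hp
      constructor
      · intro h'; omega
      · intro h'; omega
    rw [← h1, h2, hF]
  have hFF' : F'.card = F.card := by
    refine Finset.card_bij' (fun p _ => (p.2, p.1)) (fun p _ => (p.2, p.1)) ?_ ?_ ?_ ?_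
    · intro p hp
      rw [hF', Finset.mem_filter] at hp
      rw [hF, Finset.mem_filter]
      exact ⟨hEsymm p hp.1, hp.2⟩
    · intro p hp
      rw [hF, Finset.mem_filter] at hp
      rw [hF', Finset.mem_filter]
      exact ⟨hEsymm p hp.1, hp.2⟩
    · intro p _
      rfl
    · intro p _
      rfl
  have hconnF : ∀ u v : Quotient (orbSetoid (Subgroup.closure ({α, β} : Set (Perm Ω)))),
      Relation.EqvGen (fun u v => (u, v) ∈ F) u v := by
    intro u v
    have h := hconn u v
    induction h with
    | rel a b hr =>
      rcases lt_or_gt_of_ne (hphne _ hr) with hlt | hgt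
      · exact Relation.EqvGen.rel _ _ (by rw [hF, Finset.mem_filter]; exact ⟨hr, hlt⟩)
      · refine Relation.EqvGen.symm _ _ (Relation.EqvGen.rel _ _ ?_)
        rw [hF, Finset.mem_filter]
        exact ⟨hEsymm _ hr, hgt⟩
    | refl a => exact Relation.EqvGen.refl _
    | symm a b _ ih => exact Relation.EqvGen.symm _ _ ih
    | trans a b c _ _ ih1 ih2 => exact Relation.EqvGen.trans _ _ _ ih1 ih2
  have hncl1 : ncl (Relation.EqvGen.setoid (fun u v => (u, v) ∈ F)) = 1 := by
    haveI hne : Nonempty (Quotient (Relation.EqvGen.setoid (fun u v => (u, v) ∈ F))) :=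
      ⟨Quotient.mk _ (Quotient.mk _ (Classical.arbitrary Ω))⟩
    haveI hss : Subsingleton (Quotient (Relation.EqvGen.setoid (fun u v => (u, v) ∈ F))) := by
      constructor
      rintro ⟨u⟩ ⟨v⟩
      exact Quotient.sound (hconnF u v)
    rw [ncl]
    exact Nat.card_eq_one_iff_unique.mpr ⟨hss, hne⟩
  have hgraph := eqvgen_classes_bound F
  have hQG : ncl (orbSetoid (Subgroup.closure ({α, β} : Set (Perm Ω)))) =
      Fintype.card (Quotient (orbSetoid (Subgroup.closure ({α, β} : Set (Perm Ω))))) := by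
    rw [ncl, Nat.card_eq_fintype_card]
  have hccγ : cc (α * β) = Fintype.card (Quotient (cyc (α * β))) := by
    rw [cc, ncl, Nat.card_eq_fintype_card]
  have hZle : Zne.card ≤ NF.card := Finset.card_le_card hZneNF
  omega


end Lower

section Glue
variable {Ω : Type*}

lemma numOrbits_eq (G : Subgroup (Equiv.Perm Ω)) : numOrbits G = ncl (orbSetoid G) :=
  numOrbits'_eq G

lemma nu_add_card {D : Multiset ℕ} (h : ∀ x ∈ D, 0 < x) : nu D + Multiset.card D = D.sum := by
  revert h
  refine Multiset.induction_on D (fun _ => by simp [nu]) (fun a s ih h => ?_)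
  have ha : 0 < a := h a (Multiset.mem_cons_self a s)
  have hs := ih (fun x hx => h x (Multiset.mem_cons_of_mem hx))
  simp only [nu, Multiset.map_cons, Multiset.sum_cons, Multiset.card_cons] at *
  omega

end Glue


end St12

/-- If `gcd(D₁) ≠ 1`, `⟨α, β⟩` has exactly `t` orbits and there is `ω` with
`ω² = αβ` making `⟨α, β, ω⟩` transitive, then `αβ` is a product of exactly `2t − 1`
disjoint cycles (orbits of `⟨αβ⟩`, fixed points included). -/
theorem statement_12 {Ω : Type*} [Fintype Ω] [DecidableEq Ω] (d : ℕ)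
    (hcard : Fintype.card Ω = d) (hd : Odd d) (hdpos : 0 < d)
    (D₁ D₂ : Multiset ℕ) (hP1 : IsPartitionOf d D₁) (hP2 : IsPartitionOf d D₂)
    (hsum : nu D₁ + nu D₂ = d - 1)
    (hgcd : D₁.gcd ≠ 1)
    (α β : Equiv.Perm Ω) (hα : fullCycleType α = D₁) (hβ : fullCycleType β = D₂)
    (t : ℕ) (horb : numOrbits (Subgroup.closure {α, β}) = t)
    (ω : Equiv.Perm Ω) (hω : ω ^ 2 = α * β)
    (htrans : SubgroupTransitive (Subgroup.closure {α, β, ω})) :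
    numOrbits (Subgroup.zpowers (α * β)) = 2 * t - 1 := by
  classical
  have hccα : St12.cc α = Multiset.card D₁ := by
    rw [St12.cc_eq_fullCycleType_card]
    have h : Multiset.card (fullCycleType α) =
        α.cycleType.card + (Fintype.card Ω - α.support.card) := by
      rw [fullCycleType, Multiset.card_add, Multiset.card_replicate]
    rw [← h, hα]
  have hccβ : St12.cc β = Multiset.card D₂ := by
    rw [St12.cc_eq_fullCycleType_card]
    have h : Multiset.card (fullCycleType β) =
        β.cycleType.card + (Fintype.card Ω - β.support.card) := by
      rw [fullCycleType, Multiset.card_add, Multiset.card_replicate]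
    rw [← h, hβ]
  have h1 : nu D₁ + Multiset.card D₁ = d := by
    rw [St12.nu_add_card hP1.1, hP1.2]
  have h2 : nu D₂ + Multiset.card D₂ = d := by
    rw [St12.nu_add_card hP2.1, hP2.2]
  have ht : St12.ncl (St12.orbSetoid (Subgroup.closure ({α, β} : Set (Equiv.Perm Ω)))) = t := by
    rw [← St12.numOrbits_eq]
    exact horb
  have hupper := St12.ree α β
  have hlower := St12.lower_bound α β ω (by rw [hcard]; exact hd) hω htrans
  have hfinal : St12.cc (α * β) = 2 * t - 1 := by omega
  have hobj : numOrbits (Subgroup.zpowers (α * β)) = St12.cc (α * β) := by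
    rw [St12.numOrbits_eq]
    rfl
  rw [hobj, hfinal]
end

section
/- Let d be an odd positive integer, k ≥ 3, and let 𝒟 = {D₁,…,Dₖ} be partitions of d with Σᵢ ν(Dᵢ) = d − 1 and gcd(D₁) ≠ 1. Let αᵢ ∈ Dᵢ be permutations of a d-element set such that ⟨α₁,…,αₖ⟩ has t > 1 orbits, and suppose there exists a permutation ω with ω² = α₁α₂⋯αₖ such that ⟨α₁,…,αₖ, ω⟩ is transitive. Then the product α₁α₂⋯αₖ is the product of exactly 2t − 1 disjoint cycles; that is, the number of orbits of ⟨α₁⋯αₖ⟩ on the d points (counting fixed points as trivial cycles) equals 2t − 1. -/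
namespace S17
open Equiv Equiv.Perm Set Subgroup

section Counting
variable {X Y : Type*} [Finite X]

/-- If the partition `F` refines the partition `G` (as class maps), the number of
`G`-classes is at most the number of `F`-classes. -/
lemma card_range_le_of_factors (F G : X → Set Y)
    (h : ∀ a b : X, F a = F b → G a = G b) :
    Nat.card (Set.range G) ≤ Nat.card (Set.range F) := by
  have hfin : Finite (Set.range F) := Set.finite_range F
  have hsurj : Function.Surjective
      (fun A : Set.range F => (⟨G A.2.choose, Set.mem_range_self _⟩ : Set.range G)) := by
    rintro ⟨B, b, rfl⟩
    refine ⟨⟨F b, Set.mem_range_self b⟩, ?_⟩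
    have : F (Set.mem_range_self (f := F) b).choose = F b :=
      (Set.mem_range_self (f := F) b).choose_spec
    exact Subtype.ext (h _ _ this)
  exact Nat.card_le_card_of_surjective _ hsurj

lemma card_range_lt_of_factors (F G : X → Set Y)
    (h : ∀ a b : X, F a = F b → G a = G b) (u v : X)
    (hne : F u ≠ F v) (heq : G u = G v) :
    Nat.card (Set.range G) + 1 ≤ Nat.card (Set.range F) := by
  classical
  have hfinF : Finite (Set.range F) := Set.finite_range F
  have hfinG : Finite (Set.range G) := Set.finite_range G
  letI := Fintype.ofFinite (Set.range F)
  letI := Fintype.ofFinite (Set.range G)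
  set Φ : Set.range F → Set.range G :=
    fun A => (⟨G A.2.choose, Set.mem_range_self _⟩ : Set.range G) with hΦ
  have key : ∀ a : X, (Φ ⟨F a, Set.mem_range_self a⟩ : Set Y) = G a := by
    intro a
    have : F (Set.mem_range_self (f := F) a).choose = F a :=
      (Set.mem_range_self (f := F) a).choose_spec
    exact h _ _ this
  have hsurj : Function.Surjective Φ := by
    rintro ⟨B, b, rfl⟩
    exact ⟨⟨F b, Set.mem_range_self b⟩, Subtype.ext (key b)⟩
  have hninj : ¬ Function.Injective Φ := by
    intro hinj
    have h1 : Φ ⟨F u, Set.mem_range_self u⟩ = Φ ⟨F v, Set.mem_range_self v⟩ :=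
      Subtype.ext (by rw [key u, key v, heq])
    exact hne (congrArg Subtype.val (hinj h1))
  have := Fintype.card_lt_of_surjective_not_injective Φ hsurj hninj
  rw [Nat.card_eq_fintype_card, Nat.card_eq_fintype_card]
  omega

/-- The key counting lemma: if classes of `G` only merge `F`-classes through the
classes of `u` and `v`, then `F` has at most one more class than `G`. -/
lemma card_range_le_succ (F G : X → Set Y) (u v : X)
    (h : ∀ a b : X, G a = G b → F a = F b ∨ F a = F u ∨ F a = F v) :
    Nat.card (Set.range F) ≤ Nat.card (Set.range G) + 1 := by
  classical
  have hfinF : (Set.range F).Finite := Set.finite_range F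
  have hfinG : (Set.range G).Finite := Set.finite_range G
  set Φ : Set Y → Set Y := fun A =>
    if hA : A ∈ Set.range F then G hA.choose else ∅ with hΦ
  have key : ∀ a : X, ∃ b : X, F b = F a ∧ Φ (F a) = G b := by
    intro a
    have hA : F a ∈ Set.range F := Set.mem_range_self a
    exact ⟨hA.choose, hA.choose_spec, by simp [hΦ, dif_pos hA]⟩
  have hmaps : Set.MapsTo Φ (Set.range F \ {F v}) (Set.range G) := by
    rintro A ⟨⟨a, rfl⟩, -⟩
    obtain ⟨b, -, hb⟩ := key a
    exact hb ▸ Set.mem_range_self b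
  have hinj : Set.InjOn Φ (Set.range F \ {F v}) := by
    rintro A ⟨⟨a, rfl⟩, hAv⟩ B ⟨⟨b, rfl⟩, hBv⟩ hAB
    obtain ⟨a', ha', ha2⟩ := key a
    obtain ⟨b', hb', hb2⟩ := key b
    rw [ha2, hb2] at hAB
    have h1 := h a' b' hAB
    have h2 := h b' a' hAB.symm
    rw [ha'] at h1; rw [hb'] at h2
    rw [ha'] at h2; rw [hb'] at h1
    simp only [Set.mem_singleton_iff] at hAv hBv
    rcases h1 with h1 | h1 | h1
    · exact h1
    · rcases h2 with h2 | h2 | h2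
      · exact h2.symm
      · exact h1.trans h2.symm
      · exact absurd h2 hBv
    · exact absurd h1 hAv
  have h1 : (Set.range F \ {F v}).ncard ≤ (Set.range G).ncard :=
    Set.ncard_le_ncard_of_injOn Φ hmaps hinj hfinG
  have h2 : (Set.range F \ {F v}).ncard + 1 = (Set.range F).ncard :=
    Set.ncard_diff_singleton_add_one (Set.mem_range_self v) hfinF
  rw [Nat.card_coe_set_eq, Nat.card_coe_set_eq]
  omega

end Counting

variable {Ω : Type*}

lemma mem_orbSet_self (G : Subgroup (Equiv.Perm Ω)) (x : Ω) : x ∈ orbSet G x :=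
  ⟨1, one_mem G, rfl⟩

lemma orbSet_eq_of_mem {G : Subgroup (Equiv.Perm Ω)} {x y : Ω}
    (h : y ∈ orbSet G x) : orbSet G x = orbSet G y := by
  obtain ⟨g, hg, rfl⟩ := h
  ext z
  constructor
  · rintro ⟨h', hh, rfl⟩
    exact ⟨h' * g⁻¹, mul_mem hh (inv_mem hg), by simp [mul_apply]⟩
  · rintro ⟨h', hh, rfl⟩
    exact ⟨h' * g, mul_mem hh hg, by simp [mul_apply]⟩

lemma orbSet_eq_iff {G : Subgroup (Equiv.Perm Ω)} {x y : Ω} :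
    orbSet G x = orbSet G y ↔ y ∈ orbSet G x :=
  ⟨fun h => h ▸ mem_orbSet_self G y, orbSet_eq_of_mem⟩

lemma numOrbits_le_of_le [Finite Ω] {G H : Subgroup (Equiv.Perm Ω)} (h : G ≤ H) :
    numOrbits H ≤ numOrbits G := by
  refine card_range_le_of_factors (orbSet G) (orbSet H) (fun a b hab => ?_)
  have : b ∈ orbSet G a := hab ▸ mem_orbSet_self G b
  obtain ⟨g, hg, rfl⟩ := this
  exact orbSet_eq_of_mem ⟨g, h hg, rfl⟩

/-- If each generator moves points within the orbits of `H`, so does every element of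
the closure. -/
lemma closure_disp {S : Set (Equiv.Perm Ω)} {H : Subgroup (Equiv.Perm Ω)}
    (hS : ∀ g ∈ S, ∀ z, g z ∈ orbSet H z) :
    ∀ g ∈ Subgroup.closure S, ∀ z : Ω, g z ∈ orbSet H z := by
  intro g hg
  induction hg using closure_induction with
  | mem x hx => exact hS x hx
  | one => exact fun z => mem_orbSet_self H z
  | mul x y hx hy px py =>
    intro z
    have h1 := py z
    have h2 := px (y z)
    rw [mul_apply, orbSet_eq_of_mem h1]
    exact h2
  | inv x hx px =>
    intro z
    have h2 := px (x⁻¹ z)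
    have : z ∈ orbSet H (x⁻¹ z) := by simpa using h2
    rw [← orbSet_eq_of_mem this]
    exact mem_orbSet_self H _

lemma numOrbits_le_closure_of_disp [Finite Ω] {S : Set (Equiv.Perm Ω)}
    {H : Subgroup (Equiv.Perm Ω)}
    (hS : ∀ g ∈ S, ∀ z, g z ∈ orbSet H z) :
    numOrbits H ≤ numOrbits (Subgroup.closure S) := by
  refine card_range_le_of_factors (orbSet (Subgroup.closure S)) (orbSet H)
    (fun a b hab => ?_)
  have hb : b ∈ orbSet (Subgroup.closure S) a := hab ▸ mem_orbSet_self _ b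
  obtain ⟨g, hg, rfl⟩ := hb
  exact orbSet_eq_of_mem (closure_disp hS g hg a)

/-- Adding a single swap as a generator decreases the number of orbits by at most `1`. -/
lemma numOrbits_closure_insert_swap [Finite Ω] [DecidableEq Ω]
    (S : Set (Equiv.Perm Ω)) (u v : Ω) :
    numOrbits (Subgroup.closure S) ≤
      numOrbits (Subgroup.closure (insert (Equiv.swap u v) S)) + 1 := by
  set H := Subgroup.closure S with hH
  set F : Ω → Set Ω := orbSet H with hF
  set B := Subgroup.closure (insert (Equiv.swap u v) S) with hB
  set Rel : Ω → Ω → Prop := fun a b => F a = F b ∨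
      ((F a = F u ∨ F a = F v) ∧ (F b = F u ∨ F b = F v)) with hRel
  have hRsymm : ∀ a b, Rel a b → Rel b a := by
    rintro a b (h | ⟨h1, h2⟩)
    · exact Or.inl h.symm
    · exact Or.inr ⟨h2, h1⟩
  have hRtrans : ∀ a b c, Rel a b → Rel b c → Rel a c := by
    rintro a b c (h | ⟨h1, h2⟩) (h' | ⟨h1', h2'⟩)
    · exact Or.inl (h.trans h')
    · exact Or.inr ⟨h ▸ h1', h2'⟩
    · exact Or.inr ⟨h1, h'.symm ▸ h2⟩
    · exact Or.inr ⟨h1, h2'⟩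
  have key : ∀ g ∈ B, ∀ a : Ω, Rel a (g a) := by
    intro g hg
    induction hg using closure_induction with
    | mem x hx =>
      rcases hx with hx | hx
      · intro a
        subst hx
        rcases eq_or_ne a u with rfl | hau
        · rcases eq_or_ne a v with rfl | hav
          · exact Or.inl (by simp)
          · rw [Equiv.swap_apply_left]
            exact Or.inr ⟨Or.inl rfl, Or.inr rfl⟩
        · rcases eq_or_ne a v with rfl | hav
          · rw [Equiv.swap_apply_right]
            exact Or.inr ⟨Or.inr rfl, Or.inl rfl⟩
          · rw [Equiv.swap_apply_of_ne_of_ne hau hav]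
            exact Or.inl rfl
      · intro a
        exact Or.inl (orbSet_eq_of_mem ⟨x, subset_closure hx, rfl⟩)
    | one => exact fun a => Or.inl rfl
    | mul x y hx hy px py =>
      intro a
      exact hRtrans _ _ _ (py a) (by simpa [mul_apply] using px (y a))
    | inv x hx px =>
      intro a
      have := px (x⁻¹ a)
      simp only [Equiv.Perm.coe_inv, Equiv.apply_symm_apply] at this
      exact hRsymm _ _ this
  refine card_range_le_succ F (orbSet B) u v (fun a b hab => ?_)
  have hb : b ∈ orbSet B a := hab ▸ mem_orbSet_self _ b
  obtain ⟨g, hg, rfl⟩ := hb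
  rcases key g hg a with h | ⟨h1, _⟩
  · exact Or.inl h
  · exact Or.inr h1


set_option linter.unusedSectionVars false
variable {Ω : Type*} [Fintype Ω] [DecidableEq Ω]

/-- The cycle (as a set) of `x` under `σ`. -/
def csc (σ : Equiv.Perm Ω) : Ω → Set Ω := fun x => {y | σ.SameCycle x y}

/-- The number of cycles of `σ` (fixed points included). -/
noncomputable def cyc (σ : Equiv.Perm Ω) : ℕ := Nat.card (Set.range (csc σ))

lemma csc_eq_of_sameCycle {σ : Equiv.Perm Ω} {a b : Ω} (h : σ.SameCycle a b) :
    csc σ a = csc σ b := by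
  ext z
  exact ⟨fun hz => (h.symm.trans hz : _), fun hz => (h.trans hz : _)⟩

lemma sameCycle_of_csc_eq {σ : Equiv.Perm Ω} {a b : Ω} (h : csc σ a = csc σ b) :
    σ.SameCycle a b := by
  have : b ∈ csc σ b := Equiv.Perm.SameCycle.refl σ b
  rw [← h] at this
  exact this

lemma sameCycle_pow {σ : Equiv.Perm Ω} (a : Ω) (i : ℕ) : σ.SameCycle a ((σ ^ i) a) :=
  ⟨(i : ℤ), by rw [zpow_natCast]⟩

/-- Multiplying by a swap merges cycle classes only through those of `u` and `v`. -/
lemma sameCycle_swap_mul_cases (ρ : Equiv.Perm Ω) (u v a b : Ω)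
    (h : (Equiv.swap u v * ρ).SameCycle a b) :
    ρ.SameCycle a b ∨ ρ.SameCycle a u ∨ ρ.SameCycle a v := by
  set τ := Equiv.swap u v * ρ with hτ
  by_cases ha : ρ.SameCycle a u ∨ ρ.SameCycle a v
  · exact Or.inr ha
  push_neg at ha
  left
  obtain ⟨i, -, hb⟩ := h.exists_pow_eq'
  have key : ∀ j : ℕ, (τ ^ j) a = (ρ ^ j) a := by
    intro j
    induction j with
    | zero => simp
    | succ n ih =>
      have hz : ρ.SameCycle a ((ρ ^ n) a) := sameCycle_pow a n
      have h1 : ρ ((ρ ^ n) a) ≠ u := by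
        intro hu
        exact ha.1 (hz.trans (hu ▸ ⟨1, by simp⟩))
      have h2 : ρ ((ρ ^ n) a) ≠ v := by
        intro hv
        exact ha.2 (hz.trans (hv ▸ ⟨1, by simp⟩))
      rw [pow_succ', mul_apply, ih, hτ, mul_apply,
        Equiv.swap_apply_of_ne_of_ne h1 h2, pow_succ', mul_apply]
  rw [key i] at hb
  exact hb ▸ sameCycle_pow a i

/-- If `u` and `v` are in different cycles of `ρ`, then after multiplying by the swap
they are in the same cycle. -/
lemma sameCycle_swap_mul_of_not (ρ : Equiv.Perm Ω) (u v : Ω)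
    (h : ¬ ρ.SameCycle u v) :
    (Equiv.swap u v * ρ).SameCycle v u := by
  set τ := Equiv.swap u v * ρ with hτ
  have huv : u ≠ v := fun huv => h (huv ▸ Equiv.Perm.SameCycle.refl ρ u)
  have key : ∀ j : ℕ, τ.SameCycle v ((ρ⁻¹ ^ (j + 1)) u) ∨ τ.SameCycle v u := by
    intro j
    induction j with
    | zero =>
      left
      have : τ (ρ⁻¹ u) = v := by
        rw [hτ, mul_apply, Equiv.Perm.coe_inv, Equiv.apply_symm_apply, Equiv.swap_apply_left]
      have h1 : τ.SameCycle (ρ⁻¹ u) v := this ▸ ⟨1, by simp⟩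
      simpa using h1.symm
    | succ n ih =>
      rcases ih with ih | ih
      · set W := (ρ⁻¹ ^ (n + 1)) u with hW
        by_cases hWu : W = u
        · right; rwa [hWu] at ih
        · have hUW : ρ.SameCycle u W := by
            refine ⟨-(n + 1 : ℕ), ?_⟩
            rw [zpow_neg, ← inv_zpow, zpow_natCast]
          have hWv : W ≠ v := fun hWv => h (hWv ▸ hUW)
          have hstep : τ ((ρ⁻¹ ^ (n + 1 + 1)) u) = W := by
            have : (ρ⁻¹ ^ (n + 1 + 1)) u = ρ⁻¹ W := by
              rw [hW, ← mul_apply, ← pow_succ']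
            rw [this, hτ, mul_apply, Equiv.Perm.coe_inv, Equiv.apply_symm_apply,
              Equiv.swap_apply_of_ne_of_ne hWu hWv]
          left
          have hsc : τ.SameCycle ((ρ⁻¹ ^ (n + 1 + 1)) u) W :=
            ⟨1, by rw [zpow_one]; exact hstep⟩
          exact ih.trans hsc.symm
      · right; exact ih
  rcases key (orderOf ρ - 1) with hk | hk
  · have hord : orderOf ρ - 1 + 1 = orderOf ρ := by
      have := orderOf_pos ρ
      omega
    rw [hord] at hk
    have : (ρ⁻¹ ^ orderOf ρ) u = u := by
      rw [inv_pow, pow_orderOf_eq_one, inv_one, one_apply]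
    rwa [this] at hk
  · exact hk

/-- In the merge case, cycles of `ρ` map into cycles of `swap u v * ρ`. -/
lemma sameCycle_mono_swap_mul (ρ : Equiv.Perm Ω) (u v : Ω)
    (h : ¬ ρ.SameCycle u v) {a b : Ω} (hab : ρ.SameCycle a b) :
    (Equiv.swap u v * ρ).SameCycle a b := by
  set τ := Equiv.swap u v * ρ with hτ
  have hvu : τ.SameCycle v u := sameCycle_swap_mul_of_not ρ u v h
  have key : ∀ z : Ω, τ.SameCycle z (ρ z) := by
    intro z
    by_cases hzu : ρ z = u
    · have h1 : τ z = v := by rw [hτ, mul_apply, hzu, Equiv.swap_apply_left]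
      have h2 : τ.SameCycle z v := ⟨1, by rw [zpow_one]; exact h1⟩
      rw [hzu]
      exact h2.trans hvu
    by_cases hzv : ρ z = v
    · have h1 : τ z = u := by rw [hτ, mul_apply, hzv, Equiv.swap_apply_right]
      have h2 : τ.SameCycle z u := ⟨1, by rw [zpow_one]; exact h1⟩
      rw [hzv]
      exact h2.trans hvu.symm
    · have h1 : τ z = ρ z := by
        rw [hτ, mul_apply, Equiv.swap_apply_of_ne_of_ne hzu hzv]
      exact ⟨1, by rw [zpow_one]; exact h1⟩
  obtain ⟨i, -, hb⟩ := hab.exists_pow_eq'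
  have key2 : ∀ j : ℕ, τ.SameCycle a ((ρ ^ j) a) := by
    intro j
    induction j with
    | zero => simpa using Equiv.Perm.SameCycle.refl τ a
    | succ n ih =>
      have := key ((ρ ^ n) a)
      rw [← mul_apply, ← pow_succ'] at this
      exact ih.trans this
  exact hb ▸ key2 i

/-- Multiplying by a swap changes the number of cycles by at most one (each way). -/
lemma cyc_le_cyc_swap_mul_add_one (ρ : Equiv.Perm Ω) (u v : Ω) :
    cyc ρ ≤ cyc (Equiv.swap u v * ρ) + 1 := by
  refine card_range_le_succ (csc ρ) (csc (Equiv.swap u v * ρ)) u v ?_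
  intro a b hab
  have h := sameCycle_swap_mul_cases ρ u v a b (sameCycle_of_csc_eq hab)
  rcases h with h | h | h
  · exact Or.inl (csc_eq_of_sameCycle h)
  · exact Or.inr (Or.inl (csc_eq_of_sameCycle h))
  · exact Or.inr (Or.inr (csc_eq_of_sameCycle h))

lemma cyc_swap_mul_le_cyc_add_one (ρ : Equiv.Perm Ω) (u v : Ω) :
    cyc (Equiv.swap u v * ρ) ≤ cyc ρ + 1 := by
  have := cyc_le_cyc_swap_mul_add_one (Equiv.swap u v * ρ) u v
  rwa [← mul_assoc, Equiv.swap_mul_self, one_mul] at this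

/-- Merging two distinct cycles strictly decreases the cycle count. -/
lemma cyc_swap_mul_merge (ρ : Equiv.Perm Ω) (u v : Ω) (h : ¬ ρ.SameCycle u v) :
    cyc (Equiv.swap u v * ρ) + 1 ≤ cyc ρ := by
  refine card_range_lt_of_factors (csc ρ) (csc (Equiv.swap u v * ρ)) ?_ u v ?_ ?_
  · intro a b hab
    exact csc_eq_of_sameCycle (sameCycle_mono_swap_mul ρ u v h (sameCycle_of_csc_eq hab))
  · intro he
    exact h (sameCycle_of_csc_eq he)
  · exact csc_eq_of_sameCycle (sameCycle_swap_mul_of_not ρ u v h).symm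

/-- Shortening a nontrivial cycle increases the cycle count. -/
lemma cyc_add_one_le_cyc_swap_mul (g : Equiv.Perm Ω) (x : Ω) (hx : g x ≠ x) :
    cyc g + 1 ≤ cyc (Equiv.swap x (g x) * g) := by
  set g' := Equiv.swap x (g x) * g with hg'
  have hgx : Equiv.swap x (g x) * g' = g := by
    rw [hg', ← mul_assoc, Equiv.swap_mul_self, one_mul]
  have hfix : g' x = x := by
    rw [hg', mul_apply, Equiv.swap_apply_right]
  have hnot : ¬ g'.SameCycle x (g x) := by
    rintro ⟨k, hk⟩
    rw [Equiv.Perm.zpow_apply_eq_self_of_apply_eq_self hfix k] at hk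
    exact hx hk.symm
  have := cyc_swap_mul_merge g' x (g x) hnot
  rwa [hgx] at this



lemma orbSet_zpowers (σ : Equiv.Perm Ω) (x : Ω) :
    orbSet (Subgroup.zpowers σ) x = csc σ x := by
  ext y
  constructor
  · rintro ⟨g, hg, rfl⟩
    obtain ⟨k, rfl⟩ := Subgroup.mem_zpowers_iff.mp hg
    exact ⟨k, rfl⟩
  · rintro ⟨k, rfl⟩
    exact ⟨σ ^ k, Subgroup.mem_zpowers_iff.mpr ⟨k, rfl⟩, rfl⟩

lemma numOrbits_zpowers (σ : Equiv.Perm Ω) :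
    numOrbits (Subgroup.zpowers σ) = cyc σ := by
  unfold numOrbits cyc
  congr 1
  rw [funext (orbSet_zpowers σ)]

lemma mem_csc_iff_eq {σ : Equiv.Perm Ω} {a x : Ω} : x ∈ csc σ a ↔ csc σ x = csc σ a := by
  constructor
  · intro h
    ext z
    exact ⟨fun hz => ((h : σ.SameCycle a x).trans hz : _),
      fun hz => ((h : σ.SameCycle a x).symm.trans hz : _)⟩
  · intro h
    have : x ∈ csc σ x := Equiv.Perm.SameCycle.refl σ x
    rwa [h] at this

lemma csc_fixed {σ : Equiv.Perm Ω} {x : Ω} (hx : σ x = x) : csc σ x = {x} := by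
  ext y
  constructor
  · rintro ⟨k, rfl⟩
    rw [Equiv.Perm.zpow_apply_eq_self_of_apply_eq_self hx k]
    rfl
  · intro h
    have hyx : y = x := h
    subst hyx
    exact Equiv.Perm.SameCycle.refl σ y

lemma csc_support {σ : Equiv.Perm Ω} {x : Ω} (hx : x ∈ σ.support) :
    csc σ x = ↑(σ.cycleOf x).support := by
  ext y
  rw [Finset.mem_coe, Equiv.Perm.mem_support_cycleOf_iff]
  exact ⟨fun h => ⟨h, hx⟩, fun h => h.1⟩

/-- The number of cycles equals the number of parts of the full cycle type. -/
lemma cyc_eq_card_fullCycleType (σ : Equiv.Perm Ω) :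
    cyc σ = (fullCycleType σ).card := by
  classical
  have hsplit : Set.range (csc σ) =
      csc σ '' ↑σ.support ∪ csc σ '' (↑σ.support : Set Ω)ᶜ := by
    rw [← Set.image_union, Set.union_compl_self, Set.image_univ]
  have hdisj : Disjoint (csc σ '' ↑σ.support) (csc σ '' (↑σ.support : Set Ω)ᶜ) := by
    rw [Set.disjoint_left]
    rintro A ⟨a, ha, rfl⟩ ⟨b, hb, hba⟩
    simp only [Set.mem_compl_iff, Finset.mem_coe] at hb
    have hbfix : σ b = b := by
      by_contra hbf
      exact hb (Equiv.Perm.mem_support.mpr hbf)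
    rw [csc_fixed hbfix] at hba
    have : a ∈ csc σ a := Equiv.Perm.SameCycle.refl σ a
    rw [← hba] at this
    rw [Set.mem_singleton_iff] at this
    subst this
    exact hb ha
  have h1 : (csc σ '' (↑σ.support : Set Ω)ᶜ).ncard =
      Fintype.card Ω - σ.support.card := by
    rw [Set.ncard_image_of_injOn]
    · have : ((↑σ.support : Set Ω)ᶜ) = ↑(σ.supportᶜ) := by
        rw [Finset.coe_compl]
      rw [this, Set.ncard_coe_finset, Finset.card_compl]
    · intro a ha b hb hab
      simp only [Set.mem_compl_iff, Finset.mem_coe, Equiv.Perm.mem_support, not_not] at ha hb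
      rw [csc_fixed ha, csc_fixed hb] at hab
      exact Set.singleton_eq_singleton_iff.mp hab
  have h2 : csc σ '' ↑σ.support =
      (fun c : Equiv.Perm Ω => (↑c.support : Set Ω)) '' ↑σ.cycleFactorsFinset := by
    ext A
    constructor
    · rintro ⟨a, ha, rfl⟩
      refine ⟨σ.cycleOf a, ?_, (csc_support ha).symm⟩
      exact Finset.mem_coe.mpr ((Equiv.Perm.cycleOf_mem_cycleFactorsFinset_iff).mpr ha)
    · rintro ⟨c, hc, rfl⟩
      rw [Finset.mem_coe] at hc
      have hcyc : c.IsCycle := (Equiv.Perm.mem_cycleFactorsFinset_iff.mp hc).1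
      obtain ⟨a, ha⟩ := hcyc.nonempty_support
      have haσ : a ∈ σ.support :=
        Equiv.Perm.mem_cycleFactorsFinset_support_le hc ha
      refine ⟨a, haσ, ?_⟩
      rw [csc_support haσ, ← Equiv.Perm.cycle_is_cycleOf ha hc]
  have h3 : (csc σ '' ↑σ.support).ncard = σ.cycleType.card := by
    rw [h2, Set.ncard_image_of_injOn, Set.ncard_coe_finset]
    · rw [Equiv.Perm.cycleType_def, Multiset.card_map]
      rfl
    · intro c hc c' hc' hcc
      rw [Finset.mem_coe] at hc hc'
      have hcyc : c.IsCycle := (Equiv.Perm.mem_cycleFactorsFinset_iff.mp hc).1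
      obtain ⟨a, ha⟩ := hcyc.nonempty_support
      have hcc' : (↑c.support : Set Ω) = ↑c'.support := hcc
      have ha' : a ∈ c'.support := by
        rw [← Finset.mem_coe, ← hcc']
        exact ha
      rw [Equiv.Perm.cycle_is_cycleOf ha hc, Equiv.Perm.cycle_is_cycleOf ha' hc']
  unfold cyc
  rw [Nat.card_coe_set_eq, hsplit, Set.ncard_union_eq hdisj
    (Set.toFinite _) (Set.toFinite _), h1, h3]
  unfold fullCycleType
  rw [Multiset.card_add, Multiset.card_replicate]

lemma fullCycleType_sum (σ : Equiv.Perm Ω) :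
    (fullCycleType σ).sum = Fintype.card Ω := by
  unfold fullCycleType
  rw [Multiset.sum_add, Equiv.Perm.sum_cycleType, Multiset.sum_replicate, smul_eq_mul,
    mul_one]
  have := Finset.card_le_univ σ.support
  omega

lemma nu_add_card (D : Multiset ℕ) (hpos : ∀ x ∈ D, 0 < x) :
    nu D + Multiset.card D = D.sum := by
  induction D using Multiset.induction with
  | empty => simp [nu]
  | cons a D ih =>
    have ha : 0 < a := hpos a (Multiset.mem_cons_self a D)
    have hD := ih (fun x hx => hpos x (Multiset.mem_cons_of_mem hx))
    unfold nu at hD ⊢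
    rw [Multiset.map_cons, Multiset.sum_cons, Multiset.card_cons, Multiset.sum_cons]
    omega


lemma natCard_range_singleton : Nat.card (Set.range (fun x : Ω => ({x} : Set Ω))) = Fintype.card Ω := by
  rw [Nat.card_coe_set_eq, ← Set.image_univ,
    Set.ncard_image_of_injective _ (fun a b hab => Set.singleton_injective hab),
    Set.ncard_univ, Nat.card_eq_fintype_card]

lemma cyc_one : cyc (1 : Equiv.Perm Ω) = Fintype.card Ω := by
  unfold cyc
  have h : csc (1 : Equiv.Perm Ω) = fun x => ({x} : Set Ω) :=
    funext fun x => csc_fixed (by simp)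
  rw [h, natCard_range_singleton]

lemma numOrbits_of_subsingleton {S : Set (Equiv.Perm Ω)} (hS : S ⊆ {1}) :
    numOrbits (Subgroup.closure S) = Fintype.card Ω := by
  have hbot : Subgroup.closure S ≤ ⊥ := (Subgroup.closure_le ⊥).mpr (by simpa using hS)
  have horb : orbSet (Subgroup.closure S) = fun x => ({x} : Set Ω) := by
    funext x
    ext y
    constructor
    · rintro ⟨g, hg, rfl⟩
      have : g = 1 := Subgroup.mem_bot.mp (hbot hg)
      rw [this]; rfl
    · intro h
      have hyx : y = x := h
      exact ⟨1, one_mem _, hyx.symm⟩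
  unfold numOrbits
  rw [horb, natCard_range_singleton]

lemma ub_all_one (l : List (Equiv.Perm Ω)) (hall : ∀ g ∈ l, g = 1) :
    (l.map cyc).sum + cyc l.prod + Fintype.card Ω ≤
      Fintype.card Ω * l.length + 2 * numOrbits (Subgroup.closure {h : Equiv.Perm Ω | h ∈ l}) := by
  have hprod : l.prod = 1 := List.prod_eq_one hall
  have hmap : l.map cyc = l.map (fun _ => Fintype.card Ω) := by
    refine List.map_congr_left (fun a ha => ?_)
    rw [hall a ha, cyc_one]
  have hsum : (l.map cyc).sum = Fintype.card Ω * l.length := by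
    rw [hmap]
    induction l with
    | nil => simp
    | cons a l ih => simp_all [Nat.mul_succ]; omega
  have hno := numOrbits_of_subsingleton (S := {h : Equiv.Perm Ω | h ∈ l}) (fun g hg => hall g hg)
  rw [hprod, cyc_one, hsum, hno]
  omega

/-- The Riemann–Hurwitz style upper bound for the number of cycles of a product. -/
lemma ub (N : ℕ) : ∀ l : List (Equiv.Perm Ω),
    (l.map (fun g => g.support.card)).sum ≤ N →
    (l.map cyc).sum + cyc l.prod + Fintype.card Ω ≤
      Fintype.card Ω * l.length +
        2 * numOrbits (Subgroup.closure {h : Equiv.Perm Ω | h ∈ l}) := by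
  induction N with
  | zero =>
    intro l hN
    by_cases hall : ∀ g ∈ l, g = 1
    · exact ub_all_one l hall
    · exfalso
      push_neg at hall
      obtain ⟨g, hgl, hg1⟩ := hall
      have hsupp : 0 < g.support.card := by
        rw [Finset.card_pos, Finset.nonempty_iff_ne_empty]
        exact fun h => hg1 (Equiv.Perm.support_eq_empty_iff.mp h)
      have hmem : g.support.card ∈ l.map (fun g => g.support.card) :=
        List.mem_map_of_mem hgl
      have := List.single_le_sum (fun x _ => Nat.zero_le x) _ hmem
      omega
  | succ N ih =>
    intro l hN
    by_cases hall : ∀ g ∈ l, g = 1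
    · exact ub_all_one l hall
    push_neg at hall
    obtain ⟨g, hgl, hg1⟩ := hall
    obtain ⟨l₁, l₂, rfl⟩ := List.append_of_mem hgl
    have hx : ∃ x, g x ≠ x := by
      by_contra h
      push_neg at h
      exact hg1 (Equiv.ext h)
    obtain ⟨x, hx⟩ := hx
    set s := Equiv.swap x (g x) with hs
    set l' := l₁ ++ (s * g) :: l₂ with hl'
    set l := l₁ ++ g :: l₂ with hl
    have hmeas : (l'.map (fun g => g.support.card)).sum <
        (l.map (fun g => g.support.card)).sum := by
      simp only [hl, hl', List.map_append, List.map_cons, List.sum_append, List.sum_cons]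
      have hlt := Equiv.Perm.card_support_swap_mul hx
      rw [← hs] at hlt
      omega
    have hIH := ih l' (by omega)
    set S : Set (Equiv.Perm Ω) := {h | h ∈ l} with hS
    set S' : Set (Equiv.Perm Ω) := {h | h ∈ l'} with hS'
    set T := numOrbits (Subgroup.closure S) with hT
    set T' := numOrbits (Subgroup.closure S') with hT'
    have hgS : g ∈ S := by simp [hS, hl]
    have hmemS' : ∀ h : Equiv.Perm Ω, h ∈ S' → h = s * g ∨ h ∈ S := by
      intro h hh
      simp only [hS', hl', Set.mem_setOf_eq, List.mem_append, List.mem_cons] at hh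
      rcases hh with hh | hh | hh
      · exact Or.inr (by simp [hS, hl, hh])
      · exact Or.inl hh
      · exact Or.inr (by simp [hS, hl, hh])
    have hmemS : ∀ h : Equiv.Perm Ω, h ∈ S → h = g ∨ h ∈ S' := by
      intro h hh
      simp only [hS, hl, Set.mem_setOf_eq, List.mem_append, List.mem_cons] at hh
      rcases hh with hh | hh | hh
      · exact Or.inr (by simp [hS', hl', hh])
      · exact Or.inl hh
      · exact Or.inr (by simp [hS', hl', hh])
    -- T ≤ T'
    have hdisp : ∀ h ∈ S', ∀ z : Ω, h z ∈ orbSet (Subgroup.closure S) z := by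
      intro h hh z
      rcases hmemS' h hh with rfl | hh
      · rw [mul_apply]
        by_cases h1 : g z = x
        · rw [h1, hs, Equiv.swap_apply_left]
          exact ⟨g * g, mul_mem (Subgroup.subset_closure hgS) (Subgroup.subset_closure hgS),
            by rw [mul_apply, h1]⟩
        · by_cases h2 : g z = g x
          · have hzx : z = x := g.injective h2
            rw [h2, hs, Equiv.swap_apply_right, hzx]
            exact mem_orbSet_self _ _
          · rw [hs, Equiv.swap_apply_of_ne_of_ne h1 h2]
            exact ⟨g, Subgroup.subset_closure hgS, rfl⟩
      · exact ⟨h, Subgroup.subset_closure hh, rfl⟩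
    have hTT' : T ≤ T' := numOrbits_le_closure_of_disp hdisp
    -- T' ≤ T + 1
    have hSsub : Subgroup.closure S ≤ Subgroup.closure (insert s S') := by
      rw [Subgroup.closure_le]
      intro h hh
      rcases hmemS h hh with rfl | hh
      · have h1 : s ∈ Subgroup.closure (insert s S') :=
          Subgroup.subset_closure (Set.mem_insert s S')
        have h2 : s * h ∈ Subgroup.closure (insert s S') :=
          Subgroup.subset_closure (Set.mem_insert_of_mem _ (by simp [hS', hl']))
        have := mul_mem h1 h2
        rwa [← mul_assoc, hs, Equiv.swap_mul_self, one_mul] at this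
      · exact Subgroup.subset_closure (Set.mem_insert_of_mem _ hh)
    have hT'T : T' ≤ T + 1 := by
      have h1 := numOrbits_closure_insert_swap S' x (g x)
      have h2 : numOrbits (Subgroup.closure (insert s S')) ≤ T :=
        numOrbits_le_of_le hSsub
      rw [← hs] at h1
      omega
    -- products
    set A := l₁.prod with hA
    set u := A x with hu
    set v := A (g x) with hv
    have hAmem : A ∈ Subgroup.closure S' := by
      refine list_prod_mem (fun h hh => Subgroup.subset_closure ?_)
      simp [hS', hl', hh]
    have hP'mem : l'.prod ∈ Subgroup.closure S' := by
      exact list_prod_mem (fun h hh => Subgroup.subset_closure hh)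
    have hswap : Equiv.swap u v = A * s * A⁻¹ := Equiv.swap_apply_apply A x (g x)
    have hprodl : l.prod = A * (g * l₂.prod) := by
      rw [hl, List.prod_append, List.prod_cons]
    have hprodl' : l'.prod = A * (s * (g * l₂.prod)) := by
      rw [hl', List.prod_append, List.prod_cons, mul_assoc]
    have hPP' : l.prod = Equiv.swap u v * l'.prod := by
      rw [hswap, hprodl, hprodl']
      have hss : s * s = 1 := by rw [hs]; exact Equiv.swap_mul_self x (g x)
      calc A * (g * l₂.prod) = A * ((s * s) * (g * l₂.prod)) := by rw [hss, one_mul]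
        _ = A * s * A⁻¹ * (A * (s * (g * l₂.prod))) := by group
    -- the two cases
    have hcycg : cyc g + 1 ≤ cyc (s * g) := by
      rw [hs]; exact cyc_add_one_le_cyc_swap_mul g x hx
    have hkey : cyc l.prod + 2 * T' ≤ cyc l'.prod + 1 + 2 * T := by
      rcases Nat.lt_or_ge T' (T + 1) with hc | hc
      · -- T' = T
        have : cyc l.prod ≤ cyc l'.prod + 1 := by
          rw [hPP']
          exact cyc_swap_mul_le_cyc_add_one l'.prod u v
        omega
      · -- T' = T + 1
        have hT'eq : T' = T + 1 := le_antisymm hT'T hc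
        have hdiff : orbSet (Subgroup.closure S') x ≠ orbSet (Subgroup.closure S') (g x) := by
          intro heq
          have hdisp2 : ∀ h ∈ insert s S', ∀ z : Ω,
              h z ∈ orbSet (Subgroup.closure S') z := by
            intro h hh z
            rcases hh with rfl | hh
            · by_cases h1 : z = x
              · subst h1
                rw [hs, Equiv.swap_apply_left, heq]
                exact mem_orbSet_self _ _
              · by_cases h2 : z = g x
                · subst h2
                  rw [hs, Equiv.swap_apply_right, ← heq]
                  exact mem_orbSet_self _ _
                · rw [hs, Equiv.swap_apply_of_ne_of_ne h1 h2]
                  exact mem_orbSet_self _ _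
            · exact ⟨h, Subgroup.subset_closure hh, rfl⟩
          have h3 : T' ≤ numOrbits (Subgroup.closure (insert s S')) :=
            numOrbits_le_closure_of_disp hdisp2
          have h4 : numOrbits (Subgroup.closure (insert s S')) ≤ T :=
            numOrbits_le_of_le hSsub
          omega
        have hne' : ¬ (l'.prod).SameCycle u v := by
          rintro ⟨kk, hkk⟩
          have hv' : v ∈ orbSet (Subgroup.closure S') u :=
            ⟨l'.prod ^ kk, zpow_mem hP'mem kk, hkk⟩
          have h1 : orbSet (Subgroup.closure S') x = orbSet (Subgroup.closure S') u :=
            orbSet_eq_of_mem ⟨A, hAmem, rfl⟩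
          have h2 : orbSet (Subgroup.closure S') (g x) = orbSet (Subgroup.closure S') v :=
            orbSet_eq_of_mem ⟨A, hAmem, rfl⟩
          exact hdiff (by rw [h1, h2, orbSet_eq_of_mem hv'])
        have : cyc l.prod + 1 ≤ cyc l'.prod := by
          rw [hPP']
          exact cyc_swap_mul_merge l'.prod u v hne'
        omega
    -- assemble
    have hsumeq : (l.map cyc).sum + cyc (s * g) = (l'.map cyc).sum + cyc g := by
      simp only [hl, hl', List.map_append, List.map_cons, List.sum_append, List.sum_cons]
      omega
    have hlen : l'.length = l.length := by simp [hl, hl']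
    rw [hlen] at hIH
    omega

lemma natCard_range_singleton' {γ : Type*} [Finite γ] :
    Nat.card (Set.range (fun x : γ => ({x} : Set γ))) = Nat.card γ := by
  rw [Nat.card_coe_set_eq, ← Set.image_univ,
    Set.ncard_image_of_injective _ (fun a b hab => Set.singleton_injective hab),
    Set.ncard_univ]

lemma eqvGen_clsOf_eq {Q : Type*} {r : Q → Q → Prop} {a b : Q}
    (h : Relation.EqvGen r a b) :
    {z | Relation.EqvGen r a z} = {z | Relation.EqvGen r b z} := by
  ext z
  exact ⟨fun hz => (h.symm _ _).trans _ _ _ hz, fun hz => h.trans _ _ _ hz⟩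

/-- A connected graph on `Q` (presented by a finite set of 2-element edges) has at
least `card Q - 1` edges. -/
lemma edge_count {Q : Type*} [Fintype Q] [DecidableEq Q] (E : Finset (Finset Q))
    (h2 : ∀ e ∈ E, e.card = 2)
    (htot : ∀ a b : Q, Relation.EqvGen (fun x y => ({x, y} : Finset Q) ∈ E) a b) :
    Fintype.card Q ≤ E.card + 1 := by
  classical
  have main : ∀ E : Finset (Finset Q), (∀ e ∈ E, e.card = 2) →
      Fintype.card Q ≤ Nat.card (Set.range
        (fun a : Q => {b | Relation.EqvGen (fun x y => ({x, y} : Finset Q) ∈ E) a b}))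
        + E.card := by
    intro E
    induction E using Finset.induction_on with
    | empty =>
      intro _
      have hone : ∀ a b : Q, Relation.EqvGen
          (fun x y => ({x, y} : Finset Q) ∈ (∅ : Finset (Finset Q))) a b → a = b := by
        intro a b h
        induction h with
        | rel x y h => exact absurd h (Finset.notMem_empty _)
        | refl x => rfl
        | symm x y _ ih => exact ih.symm
        | trans x y z _ _ ih1 ih2 => exact ih1.trans ih2
      have : (fun a : Q => {b | Relation.EqvGen
          (fun x y => ({x, y} : Finset Q) ∈ (∅ : Finset (Finset Q))) a b}) =
          fun a : Q => ({a} : Set Q) := by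
        funext a
        ext b
        exact ⟨fun h => (hone a b h).symm, fun h => by
          have : b = a := h
          subst this
          exact Relation.EqvGen.refl b⟩
      rw [this, natCard_range_singleton', Nat.card_eq_fintype_card]
      omega
    | @insert e E henE ih =>
      intro hcards
      obtain ⟨a₀, b₀, hne, rfl⟩ :=
        Finset.card_eq_two.mp (hcards _ (Finset.mem_insert_self _ _))
      have hE2 : ∀ e' ∈ E, e'.card = 2 :=
        fun e' he' => hcards e' (Finset.mem_insert_of_mem he')
      set F : Q → Set Q :=
        fun a => {b | Relation.EqvGen (fun x y => ({x, y} : Finset Q) ∈ E) a b} with hF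
      set G : Q → Set Q := fun a => {b | Relation.EqvGen
        (fun x y => ({x, y} : Finset Q) ∈ insert {a₀, b₀} E) a b} with hG
      have hRel : ∀ a b : Q, Relation.EqvGen
          (fun x y => ({x, y} : Finset Q) ∈ insert {a₀, b₀} E) a b →
          F a = F b ∨ ((F a = F a₀ ∨ F a = F b₀) ∧ (F b = F a₀ ∨ F b = F b₀)) := by
        intro a b h
        induction h with
        | rel x y hxy =>
          rcases Finset.mem_insert.mp hxy with hxy | hxy
          · -- {x, y} = {a₀, b₀}
            have hx : x ∈ ({a₀, b₀} : Finset Q) := by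
              rw [← hxy]; exact Finset.mem_insert_self x {y}
            have hy : y ∈ ({a₀, b₀} : Finset Q) := by
              rw [← hxy]; exact Finset.mem_insert_of_mem (Finset.mem_singleton_self y)
            rcases Finset.mem_insert.mp hx with rfl | hx <;>
              rcases Finset.mem_insert.mp hy with hy' | hy'
            · exact Or.inl (congrArg F hy'.symm ▸ rfl)
            · rw [Finset.mem_singleton] at hy'
              subst hy'
              exact Or.inr ⟨Or.inl rfl, Or.inr rfl⟩
            · rw [Finset.mem_singleton] at hx
              subst hx
              rw [hy']
              exact Or.inr ⟨Or.inr rfl, Or.inl rfl⟩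
            · rw [Finset.mem_singleton] at hx hy'
              subst hx; subst hy'
              exact Or.inl rfl
          · exact Or.inl (eqvGen_clsOf_eq (Relation.EqvGen.rel x y hxy))
        | refl x => exact Or.inl rfl
        | symm x y _ ih =>
          rcases ih with h | ⟨h1, h2⟩
          · exact Or.inl h.symm
          · exact Or.inr ⟨h2, h1⟩
        | trans x y z _ _ ih1 ih2 =>
          rcases ih1 with h | ⟨h1, h2⟩
          · rcases ih2 with h' | ⟨h1', h2'⟩
            · exact Or.inl (h.trans h')
            · exact Or.inr ⟨h ▸ h1', h2'⟩
          · rcases ih2 with h' | ⟨h1', h2'⟩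
            · exact Or.inr ⟨h1, h' ▸ h2⟩
            · exact Or.inr ⟨h1, h2'⟩
      have hCL : Nat.card (Set.range F) ≤ Nat.card (Set.range G) + 1 := by
        refine card_range_le_succ F G a₀ b₀ (fun a b hab => ?_)
        have hb : b ∈ G a := by
          rw [hab]
          exact Relation.EqvGen.refl b
        rcases hRel a b hb with h | ⟨h1, -⟩
        · exact Or.inl h
        · rcases h1 with h1 | h1
          · exact Or.inr (Or.inl h1)
          · exact Or.inr (Or.inr h1)
      have hins : (insert ({a₀, b₀} : Finset Q) E).card = E.card + 1 :=
        Finset.card_insert_of_notMem henE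
      have := ih hE2
      rw [hins]
      omega
  have h1 := main E h2
  have h2' : (fun a : Q => {b | Relation.EqvGen
      (fun x y => ({x, y} : Finset Q) ∈ E) a b}) = fun _ : Q => (Set.univ : Set Q) := by
    funext a
    ext b
    exact ⟨fun _ => trivial, fun _ => htot a b⟩
  rcases isEmpty_or_nonempty Q with hQ | hQ
  · simp [Fintype.card_eq_zero]
  · rw [h2', Set.range_const, Nat.card_coe_set_eq, Set.ncard_singleton] at h1
    omega

/-- The lower bound: if the product `π` of the generators has a square root `ω` making the
group transitive, then `π` has at least `2t - 1` cycles, where `t` is the number of orbits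
of the closure of `S`. -/
lemma lower_bound (S : Set (Equiv.Perm Ω)) (π ω : Equiv.Perm Ω)
    (hπ : π ∈ Subgroup.closure S) (hsq : ω ^ 2 = π)
    (hodd : Odd (Fintype.card Ω))
    (htrans : SubgroupTransitive (Subgroup.closure (S ∪ {ω}))) :
    2 * numOrbits (Subgroup.closure S) ≤ cyc π + 1 := by
  classical
  set K := Subgroup.closure S with hK
  set F : Ω → Set Ω := csc π with hF
  set C : Ω → Set Ω := orbSet K with hC
  set t := numOrbits K with ht
  -- basic facts
  have hωω : ∀ x, ω (ω x) = π x := by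
    intro x
    rw [← hsq, pow_two, mul_apply]
  have hFπ : ∀ x, F (π x) = F x := by
    intro x
    exact (csc_eq_of_sameCycle ⟨1, by rw [zpow_one]⟩).symm
  have hFC : ∀ x, F x ⊆ C x := by
    rintro x y ⟨k, hk⟩
    exact ⟨π ^ k, zpow_mem hπ k, hk⟩
  have hcomm : ∀ k : ℤ, ω * π ^ k = π ^ k * ω := by
    intro k
    have hc : Commute ω π := by
      rw [← hsq]
      exact (Commute.refl ω).pow_right 2
    exact (hc.zpow_right k).eq
  have himg : ∀ x, ω '' F x = F (ω x) := by
    intro x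
    ext y
    constructor
    · rintro ⟨z, ⟨k, rfl⟩, rfl⟩
      refine ⟨k, ?_⟩
      rw [← mul_apply, ← hcomm, mul_apply]
    · rintro ⟨k, rfl⟩
      refine ⟨(π ^ k) x, ⟨k, rfl⟩, ?_⟩
      rw [← mul_apply, hcomm, mul_apply]
  have himg2 : ∀ x, ω '' F (ω x) = F x := by
    intro x
    rw [himg, hωω, hFπ]
  have hCC : ∀ {x y : Ω}, F x = F y → C x = C y := by
    intro x y h
    have : y ∈ F x := by
      rw [h]
      exact Equiv.Perm.SameCycle.refl π y
    exact orbSet_eq_of_mem (hFC x this)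
  -- the classes as a finset
  set classes : Finset (Set Ω) := Finset.univ.image F with hclasses
  have hclF : ∀ A ∈ classes, ∃ a : Ω, F a = A := by
    intro A hA
    obtain ⟨a, -, ha⟩ := Finset.mem_image.mp hA
    exact ⟨a, ha⟩
  have hcyc_card : cyc π = classes.card := by
    have hcoe : ↑classes = Set.range F := by
      rw [hclasses, Finset.coe_image, Finset.coe_univ, Set.image_univ]
    unfold cyc
    rw [← hF, ← hcoe, Nat.card_coe_set_eq, Set.ncard_coe_finset]
  have hsumcard : ∑ A ∈ classes, A.ncard = Fintype.card Ω := by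
    have h1 : (Finset.univ : Finset Ω).card =
        ∑ A ∈ classes, ((Finset.univ : Finset Ω).filter (fun x => F x = A)).card := by
      exact Finset.card_eq_sum_card_fiberwise
        (fun x _ => Finset.mem_image_of_mem F (Finset.mem_univ x))
    rw [← Finset.card_univ, h1]
    refine Finset.sum_congr rfl (fun A hA => ?_)
    obtain ⟨a, rfl⟩ := hclF A hA
    have : (Finset.univ.filter (fun x => F x = F a)) = (F a).toFinset := by
      ext x
      simp only [Finset.mem_filter, Finset.mem_univ, true_and, Set.mem_toFinset]
      rw [hF]
      exact ⟨fun h => mem_csc_iff_eq.mpr h, fun h => mem_csc_iff_eq.mp h⟩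
    rw [this, Set.ncard_eq_toFinset_card']
  set moved := classes.filter (fun A => ω '' A ≠ A) with hmoved
  set fixd := classes.filter (fun A => ω '' A = A) with hfixd
  have hsplitcard : fixd.card + moved.card = classes.card :=
    Finset.card_filter_add_card_filter_not (fun A => ω '' A = A)
  -- there is at least one fixed cycle (parity)
  have hfixd_pos : 1 ≤ fixd.card := by
    rcases Finset.eq_empty_or_nonempty fixd with hfe | hne
    · exfalso
      have hzero : ∑ A ∈ moved, ((A.ncard : ZMod 2)) = 0 := by
        refine Finset.sum_involution (fun A _ => ω '' A) ?_ ?_ ?_ ?_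
        · intro A hA
          have : (ω '' A).ncard = A.ncard :=
            Set.ncard_image_of_injective A ω.injective
          rw [this, ← two_mul, show ((2 : ZMod 2)) = 0 by decide, zero_mul]
        · intro A hA _
          exact (Finset.mem_filter.mp hA).2
        · intro A hA
          obtain ⟨a, rfl⟩ := hclF A (Finset.mem_filter.mp hA).1
          have hA2 := (Finset.mem_filter.mp hA).2
          show ⇑ω '' F a ∈ moved
          refine Finset.mem_filter.mpr ⟨?_, ?_⟩
          · rw [himg a]
            exact Finset.mem_image_of_mem F (Finset.mem_univ (ω a))
          · rw [himg a, himg2 a]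
            intro h
            exact hA2 (by rw [himg a]; exact h.symm)
        · intro A hA
          obtain ⟨a, rfl⟩ := hclF A (Finset.mem_filter.mp hA).1
          show ⇑ω '' (⇑ω '' F a) = F a
          rw [himg a]
          exact himg2 a
      have hall : ∑ A ∈ classes, ((A.ncard : ZMod 2)) = 0 := by
        rw [← Finset.sum_filter_add_sum_filter_not classes (fun A => ω '' A = A)]
        rw [← hmoved, ← hfixd, hfe]
        simpa using hzero
      have hcast : ((Fintype.card Ω : ℕ) : ZMod 2) = 0 := by
        rw [← hsumcard, Nat.cast_sum]
        exact hall
      rw [ZMod.natCast_eq_zero_iff] at hcast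
      rw [Nat.odd_iff] at hodd
      omega
    · exact hne.card_pos
  -- the orbit graph
  haveI : Fintype ↥(Set.range C) := Fintype.ofFinite _
  set Q := ↥(Set.range C) with hQ
  set orbQ : Ω → Q := fun x => ⟨C x, Set.mem_range_self x⟩ with horbQ
  have hQcard : Fintype.card Q = t := by
    rw [ht]
    unfold numOrbits
    rw [← hC, Nat.card_eq_fintype_card]
  set E : Finset (Finset Q) :=
    (Finset.univ.image (fun x : Ω => ({orbQ x, orbQ (ω x)} : Finset Q))).filter
      (fun e => e.card = 2) with hE
  have h2 : ∀ e ∈ E, e.card = 2 := fun e he => (Finset.mem_filter.mp he).2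
  set rel : Q → Q → Prop := fun a b => ({a, b} : Finset Q) ∈ E with hrel
  have hstep : ∀ x : Ω, Relation.EqvGen rel (orbQ x) (orbQ (ω x)) := by
    intro x
    by_cases h : orbQ x = orbQ (ω x)
    · rw [h]
      exact Relation.EqvGen.refl _
    · refine Relation.EqvGen.rel _ _ ?_
      rw [hrel]
      refine Finset.mem_filter.mpr ⟨Finset.mem_image_of_mem _ (Finset.mem_univ x), ?_⟩
      exact Finset.card_pair h
  have horbK : ∀ g ∈ K, ∀ x : Ω, orbQ (g x) = orbQ x := by
    intro g hg x
    exact Subtype.ext (orbSet_eq_of_mem ⟨g, hg, rfl⟩).symm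
  have hclaim : ∀ g ∈ Subgroup.closure (S ∪ {ω}), ∀ x : Ω,
      Relation.EqvGen rel (orbQ x) (orbQ (g x)) := by
    intro g hg
    induction hg using Subgroup.closure_induction with
    | mem h hh =>
      rcases hh with hh | hh
      · intro x
        rw [horbK h (Subgroup.subset_closure hh) x]
        exact Relation.EqvGen.refl _
      · intro x
        rw [Set.mem_singleton_iff] at hh
        subst hh
        exact hstep x
    | one =>
      intro x
      rw [one_apply]
      exact Relation.EqvGen.refl _
    | mul a b ha hb pa pb =>
      intro x
      have h1 := pb x
      have h2 := pa (b x)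
      rw [mul_apply]
      exact h1.trans _ _ _ h2
    | inv a ha pa =>
      intro x
      have := pa (a⁻¹ x)
      rw [Equiv.Perm.coe_inv, Equiv.apply_symm_apply] at this
      exact this.symm _ _
  have htot : ∀ a b : Q, Relation.EqvGen rel a b := by
    rintro ⟨A, xA, hxA⟩ ⟨B, xB, hxB⟩
    obtain ⟨g, hg, hgx⟩ := htrans xA xB
    have h1 := hclaim g hg xA
    rw [hgx] at h1
    have ha : (⟨A, xA, hxA⟩ : Q) = orbQ xA := Subtype.ext hxA.symm
    have hb : (⟨B, xB, hxB⟩ : Q) = orbQ xB := Subtype.ext hxB.symm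
    rw [ha, hb]
    exact h1
  have hedge : Fintype.card Q ≤ E.card + 1 := edge_count E h2 htot
  -- moved cycles dominate twice the edges
  set pairF : Finset Q → Finset (Set Ω) := fun e =>
    if h : ∃ x : Ω, ({orbQ x, orbQ (ω x)} : Finset Q) = e then
      {F h.choose, F (ω h.choose)} else ∅ with hpairF
  have hpair : ∀ e ∈ E, ∃ x : Ω, ({orbQ x, orbQ (ω x)} : Finset Q) = e ∧
      pairF e = {F x, F (ω x)} := by
    intro e he
    have hex : ∃ x : Ω, ({orbQ x, orbQ (ω x)} : Finset Q) = e := by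
      obtain ⟨x, -, hx⟩ := Finset.mem_image.mp (Finset.mem_filter.mp he).1
      exact ⟨x, hx⟩
    exact ⟨hex.choose, hex.choose_spec, by simp only [hpairF]; rw [dif_pos hex]⟩
  have hCne : ∀ e ∈ E, ∀ x : Ω, ({orbQ x, orbQ (ω x)} : Finset Q) = e →
      C x ≠ C (ω x) := by
    intro e he x hx heq
    have hoq : orbQ x = orbQ (ω x) := Subtype.ext heq
    have hcard := h2 e he
    rw [← hx, hoq] at hcard
    simp at hcard
  have hFne : ∀ {x : Ω}, C x ≠ C (ω x) → F x ≠ F (ω x) := by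
    intro x hc hF'
    exact hc (hCC hF')
  have hcross : ∀ {x : Ω}, C x ≠ C (ω x) → F x ∈ moved ∧ F (ω x) ∈ moved := by
    intro x hc
    have hne := hFne hc
    constructor
    · refine Finset.mem_filter.mpr ⟨Finset.mem_image_of_mem F (Finset.mem_univ x), ?_⟩
      rw [himg]
      exact fun h => hne h.symm
    · refine Finset.mem_filter.mpr ⟨Finset.mem_image_of_mem F (Finset.mem_univ (ω x)), ?_⟩
      rw [himg2]
      exact hne
  have hpairdisj : ∀ e ∈ E, ∀ e' ∈ E, e ≠ e' → Disjoint (pairF e) (pairF e') := by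
    intro e he e' he' hee
    obtain ⟨x, hx, hpx⟩ := hpair e he
    obtain ⟨x', hx', hpx'⟩ := hpair e' he'
    rw [Finset.disjoint_left]
    intro A hA hA'
    rw [hpx, Finset.mem_insert, Finset.mem_singleton] at hA
    rw [hpx', Finset.mem_insert, Finset.mem_singleton] at hA'
    apply hee
    rw [← hx, ← hx']
    have himgF : ∀ {y y' : Ω}, F y = F y' → F (ω y) = F (ω y') := by
      intro y y' h
      rw [← himg, ← himg, h]
    have horbQeq : ∀ {y y' : Ω}, C y = C y' → orbQ y = orbQ y' :=
      fun h => Subtype.ext h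
    rcases hA with rfl | rfl
    · rcases hA' with hA' | hA'
      · have h1 : C x = C x' := hCC hA'
        have h3 : C (ω x) = C (ω x') := hCC (himgF hA')
        rw [horbQeq h1, horbQeq h3]
      · have h1 : C x = C (ω x') := hCC hA'
        have h2 : F (ω x) = F (ω (ω x')) := himgF hA'
        rw [hωω, hFπ] at h2
        have h3 : C (ω x) = C x' := hCC h2
        rw [horbQeq h1, horbQeq h3]
        exact Finset.pair_comm _ _
    · rcases hA' with hA' | hA'
      · have h3 : C (ω x) = C x' := hCC hA'
        have h2 : F (ω (ω x)) = F (ω x') := himgF hA'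
        rw [hωω, hFπ] at h2
        have h1 : C x = C (ω x') := hCC h2
        rw [horbQeq h1, horbQeq h3]
        exact Finset.pair_comm _ _
      · have h3 : C (ω x) = C (ω x') := hCC hA'
        have h2 : F (ω (ω x)) = F (ω (ω x')) := himgF hA'
        rw [hωω, hFπ, hωω, hFπ] at h2
        have h1 : C x = C x' := hCC h2
        rw [horbQeq h1, horbQeq h3]
  have hsubmoved : E.biUnion pairF ⊆ moved := by
    intro A hA
    obtain ⟨e, he, hAe⟩ := Finset.mem_biUnion.mp hA
    obtain ⟨x, hx, hpx⟩ := hpair e he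
    rw [hpx, Finset.mem_insert, Finset.mem_singleton] at hAe
    have hc := hCne e he x hx
    rcases hAe with rfl | rfl
    · exact (hcross hc).1
    · exact (hcross hc).2
  have hbicard : (E.biUnion pairF).card = 2 * E.card := by
    rw [Finset.card_biUnion hpairdisj]
    rw [Finset.sum_congr rfl (fun e he => ?_), Finset.sum_const, smul_eq_mul, mul_comm]
    obtain ⟨x, hx, hpx⟩ := hpair e he
    rw [hpx]
    exact Finset.card_pair (hFne (hCne e he x hx))
  have hmoved_ge : 2 * E.card ≤ moved.card := by
    rw [← hbicard]
    exact Finset.card_le_card hsubmoved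
  rw [hQcard] at hedge
  omega

end S17

/-- For `k ≥ 3`, `gcd(D₁) ≠ 1`, if `⟨α₁,…,αₖ⟩` has `t > 1` orbits and there
is `ω` with `ω² = α₁⋯αₖ` making `⟨α₁,…,αₖ,ω⟩` transitive, then `α₁⋯αₖ` is a product of
exactly `2t − 1` disjoint cycles (orbits of `⟨α₁⋯αₖ⟩`, fixed points included). -/
theorem statement_17 {Ω : Type*} [Fintype Ω] [DecidableEq Ω] (d k : ℕ) [NeZero k]
    (hcard : Fintype.card Ω = d) (hd : Odd d) (hdpos : 0 < d) (hk : 3 ≤ k)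
    (D : Fin k → Multiset ℕ) (hP : ∀ i, IsPartitionOf d (D i))
    (hsum : ∑ i, nu (D i) = d - 1)
    (hgcd : (D 0).gcd ≠ 1)
    (α : Fin k → Equiv.Perm Ω) (hα : ∀ i, fullCycleType (α i) = D i)
    (t : ℕ) (ht : 1 < t)
    (horb : numOrbits (Subgroup.closure (Set.range α)) = t)
    (ω : Equiv.Perm Ω) (hω : ω ^ 2 = (List.ofFn α).prod)
    (htrans : SubgroupTransitive (Subgroup.closure (Set.range α ∪ {ω}))) :
    numOrbits (Subgroup.zpowers (List.ofFn α).prod) = 2 * t - 1 := by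
  classical
  set l : List (Equiv.Perm Ω) := List.ofFn α with hl
  set π : Equiv.Perm Ω := l.prod with hπdef
  have hset : {h : Equiv.Perm Ω | h ∈ l} = Set.range α := by
    ext h
    simp [hl, List.mem_ofFn]
  have hπmem : π ∈ Subgroup.closure (Set.range α) := by
    refine list_prod_mem (fun h hh => Subgroup.subset_closure ?_)
    rw [← hset]
    exact hh
  -- upper bound
  have hub := S17.ub (Ω := Ω) ((l.map fun g => g.support.card).sum) l le_rfl
  rw [hset, horb, hcard] at hub
  have hlen : l.length = k := by rw [hl, List.length_ofFn]
  have hmapsum : (l.map S17.cyc).sum = ∑ i, S17.cyc (α i) := by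
    rw [hl, List.map_ofFn, List.sum_ofFn]
    rfl
  have hci : ∀ i, S17.cyc (α i) + nu (D i) = d := by
    intro i
    have h1 : S17.cyc (α i) = (D i).card := by
      rw [S17.cyc_eq_card_fullCycleType, hα i]
    have h2 := S17.nu_add_card (D i) (hP i).1
    rw [(hP i).2] at h2
    omega
  have htotal : (∑ i, S17.cyc (α i)) + (∑ i, nu (D i)) = d * k := by
    rw [← Finset.sum_add_distrib]
    rw [Finset.sum_congr rfl (fun i _ => hci i)]
    rw [Finset.sum_const, Finset.card_univ, Fintype.card_fin, smul_eq_mul, mul_comm]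
  -- lower bound
  have hlb := S17.lower_bound (Set.range α) π ω hπmem hω (hcard ▸ hd) htrans
  rw [horb] at hlb
  -- conclude
  rw [S17.numOrbits_zpowers]
  rw [← hπdef] at hub
  rw [hmapsum, hlen] at hub
  omega
end
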